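/- arXiv:1411.0923 — 3 statements merged into one kernel-verified Lean document; each statement's English description precedes it below -/
import Mathlib

section
/- Let n ≥ 3 and let q be a 2-solvable pebble distribution on the cycle C_n of size n − 1 such that q(u) ≤ 2 for every vertex u. Then every unoccupied vertex v (a vertex with q(v) = 0) has two distinct friends each of which carries exactly two pebbles, where two distinct vertices are friends if every internal vertex of one of the two paths in C_n joining them is occupied (carries at least one pebble). -/
open SimpleGraph

/-- A single rubbling move on `G`: either a pebbling move (remove two pebbles at `v`,
add one at an adjacent vertex `u`) or a strict rubbling move (remove one pebble each at
distinct `v` and `w`, both adjacent to `u`, and add one pebble at `u`). -/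
def RubblingStep {V : Type*} [DecidableEq V] (G : SimpleGraph V) (p q : V → ℕ) : Prop :=
  (∃ v u, G.Adj v u ∧ 2 ≤ p v ∧
      q = fun x => if x = v then p x - 2 else if x = u then p x + 1 else p x) ∨
  (∃ v w u, v ≠ w ∧ G.Adj v u ∧ G.Adj w u ∧ 1 ≤ p v ∧ 1 ≤ p w ∧
      q = fun x => if x = v then p x - 1 else if x = w then p x - 1
          else if x = u then p x + 1 else p x)

/-- `q` is obtainable from `p` by an executable rubbling sequence. -/
def RubblingReach {V : Type*} [DecidableEq V] (G : SimpleGraph V) : (V → ℕ) → (V → ℕ) → Prop :=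
  Relation.ReflTransGen (RubblingStep G)

/-- The vertex `u` is `k`-reachable from the distribution `p`. -/
def KReachable {V : Type*} [DecidableEq V] (G : SimpleGraph V) (p : V → ℕ) (u : V) (k : ℕ) : Prop :=
  ∃ q, RubblingReach G p q ∧ k ≤ q u

/-- `p` is solvable: every vertex is reachable. -/
def Solvable {V : Type*} [DecidableEq V] (G : SimpleGraph V) (p : V → ℕ) : Prop :=
  ∀ u, KReachable G p u 1

/-- The optimal rubbling number: the minimum size of a solvable distribution. -/
noncomputable def optRub {V : Type*} [DecidableEq V] [Fintype V] (G : SimpleGraph V) : ℕ :=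
  sInf {m | ∃ p : V → ℕ, Solvable G p ∧ ∑ v, p v = m}

/-- Two distinct vertices are friends under `q` if all internal vertices of some path
joining them are occupied. -/
def Friends {V : Type*} (G : SimpleGraph V) (q : V → ℕ) (v w : V) : Prop :=
  v ≠ w ∧ ∃ P : G.Walk v w, P.IsPath ∧ ∀ u ∈ P.support, u ≠ v → u ≠ w → 1 ≤ q u


open Finset
open Fin.CommRing


section
variable {n : ℕ}

lemma sum_split2 (f : Fin n → ℕ) {x u : Fin n} (hxu : x ≠ u) :
    ∑ w, f w = f x + (f u + ∑ w ∈ ((univ.erase x).erase u), f w) := by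
  rw [Finset.add_sum_erase _ f (Finset.mem_erase.mpr ⟨Ne.symm hxu, Finset.mem_univ u⟩)]
  rw [Finset.add_sum_erase _ f (Finset.mem_univ x)]

lemma sum_move2 (p c : Fin n → ℕ) {x u : Fin n} (hxu : x ≠ u) (hp : 2 ≤ p x) :
    (∑ w, (if w = x then p w - 2 else if w = u then p w + 1 else p w) * c w) + 2 * c x
      = (∑ w, p w * c w) + c u := by
  rw [sum_split2 _ hxu, sum_split2 (fun w => p w * c w) hxu]
  have he : ∀ w ∈ ((univ.erase x).erase u),
      (if w = x then p w - 2 else if w = u then p w + 1 else p w) * c w = p w * c w := by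
    intro w hw
    rw [Finset.mem_erase, Finset.mem_erase] at hw
    rw [if_neg hw.2.1, if_neg hw.1]
  rw [Finset.sum_congr rfl he]
  rw [if_pos rfl, if_neg (Ne.symm hxu), if_pos rfl]
  have h1 : (p x - 2) * c x + 2 * c x = p x * c x := by
    rw [Nat.sub_mul]
    exact Nat.sub_add_cancel (Nat.mul_le_mul_right _ hp)
  have h2 : (p u + 1) * c u = p u * c u + c u := by ring
  rw [h2]
  omega

lemma sum_split3 (f : Fin n → ℕ) {x y u : Fin n} (hxy : x ≠ y) (hxu : x ≠ u) (hyu : y ≠ u) :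
    ∑ w, f w = f x + (f y + (f u + ∑ w ∈ (((univ.erase x).erase y).erase u), f w)) := by
  rw [Finset.add_sum_erase _ f
    (Finset.mem_erase.mpr ⟨Ne.symm hyu, Finset.mem_erase.mpr ⟨Ne.symm hxu, Finset.mem_univ u⟩⟩)]
  rw [Finset.add_sum_erase _ f (Finset.mem_erase.mpr ⟨Ne.symm hxy, Finset.mem_univ y⟩)]
  rw [Finset.add_sum_erase _ f (Finset.mem_univ x)]

lemma sum_move3 (p c : Fin n → ℕ) {x y u : Fin n} (hxy : x ≠ y) (hxu : x ≠ u) (hyu : y ≠ u)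
    (hpx : 1 ≤ p x) (hpy : 1 ≤ p y) :
    (∑ w, (if w = x then p w - 1 else if w = y then p w - 1 else if w = u then p w + 1 else p w) * c w)
      + c x + c y = (∑ w, p w * c w) + c u := by
  rw [sum_split3 _ hxy hxu hyu, sum_split3 (fun w => p w * c w) hxy hxu hyu]
  have he : ∀ w ∈ (((univ.erase x).erase y).erase u),
      (if w = x then p w - 1 else if w = y then p w - 1 else if w = u then p w + 1 else p w) * c w
        = p w * c w := by
    intro w hw
    rw [Finset.mem_erase, Finset.mem_erase, Finset.mem_erase] at hw
    rw [if_neg hw.2.2.1, if_neg hw.2.1, if_neg hw.1]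
  rw [Finset.sum_congr rfl he]
  rw [if_pos rfl, if_neg (Ne.symm hxy), if_pos rfl, if_neg (Ne.symm hxu), if_neg (Ne.symm hyu),
    if_pos rfl]
  have h1 : (p x - 1) * c x + c x = p x * c x := by
    rw [Nat.sub_mul, one_mul]
    exact Nat.sub_add_cancel (by simpa using Nat.mul_le_mul_right (c x) hpx)
  have h2 : (p y - 1) * c y + c y = p y * c y := by
    rw [Nat.sub_mul, one_mul]
    exact Nat.sub_add_cancel (by simpa using Nat.mul_le_mul_right (c y) hpy)
  have h3 : (p u + 1) * c u = p u * c u + c u := by ring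
  rw [h3]
  omega

end

namespace TwoFriendsAux

variable {m : ℕ}

def pos (v u : Fin (m + 3)) : ℕ := (u - v).val

lemma pos_lt (v u : Fin (m + 3)) : pos v u < m + 3 := (u - v).is_lt

lemma pos_eq_zero_iff {v u : Fin (m + 3)} : pos v u = 0 ↔ u = v := by
  unfold pos
  constructor
  · intro h
    have h2 : u - v = 0 := Fin.ext (by simpa using h)
    exact sub_eq_zero.mp h2
  · rintro rfl
    simp

lemma pos_inj {v u w : Fin (m + 3)} (h : pos v u = pos v w) : u = w := by
  have h2 : u - v = w - v := Fin.ext h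
  have := congrArg (· + v) h2
  simpa [sub_add_cancel] using this

lemma pos_pos {v u : Fin (m + 3)} (h : u ≠ v) : 1 ≤ pos v u := by
  rcases Nat.eq_zero_or_pos (pos v u) with h0 | h1
  · exact absurd (pos_eq_zero_iff.mp h0) h
  · exact h1

lemma val_one' : ((1 : Fin (m + 3)) : ℕ) = 1 := rfl

lemma pos_add_one {v u x : Fin (m + 3)} (hu : u ≠ v) (_hx : x ≠ v) (h : u - x = 1) :
    pos v u = pos v x + 1 := by
  have hux : u - v = (x - v) + 1 := by
    have : u = x + 1 := by
      have := congrArg (· + x) h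
      simpa [add_comm, sub_add_cancel] using this
    subst this; ring
  have hval : ((x - v) + 1 : Fin (m+3)).val = ((x - v).val + 1) % (m + 3) := by
    rw [Fin.val_add, val_one']
  by_cases hlast : (x - v).val + 1 < m + 3
  · unfold pos
    rw [hux, hval, Nat.mod_eq_of_lt hlast]
  · exfalso
    have h3 : (x - v).val + 1 = m + 3 := by have := (x - v).is_lt; omega
    have : pos v u = 0 := by
      unfold pos; rw [hux, hval, h3, Nat.mod_self]
    exact hu (pos_eq_zero_iff.mp this)

lemma adj_pos {v x u : Fin (m + 3)} (hx : x ≠ v) (hu : u ≠ v)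
    (h : (cycleGraph (m + 3)).Adj x u) :
    pos v u = pos v x + 1 ∨ pos v x = pos v u + 1 := by
  rw [cycleGraph_adj'] at h
  rcases h with h | h
  · right
    exact pos_add_one hx hu (Fin.ext (by simpa using h))
  · left
    exact pos_add_one hu hx (Fin.ext (by simpa using h))

lemma adj_v {v u : Fin (m + 3)} (h : (cycleGraph (m + 3)).Adj v u) :
    pos v u = 1 ∨ pos v u = m + 2 := by
  rw [cycleGraph_adj'] at h
  rcases h with h | h
  · right
    have : v - u = 1 := Fin.ext (by simpa using h)
    have h2 : u - v = -1 := by rw [← this]; ring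
    unfold pos
    rw [h2]
    simpa using Fin.coe_neg_one
  · left
    unfold pos
    have : u - v = 1 := Fin.ext (by simpa using h)
    rw [this, val_one']

def wA (v u : Fin (m + 3)) : ℕ := if u = v then 0 else 2 ^ (m + 3 - pos v u)

def wB (v u : Fin (m + 3)) : ℕ := if u = v then 0 else 2 ^ (pos v u)

def SA (v : Fin (m + 3)) (p : Fin (m + 3) → ℕ) : ℕ := ∑ u, p u * wA v u
def SB (v : Fin (m + 3)) (p : Fin (m + 3) → ℕ) : ℕ := ∑ u, p u * wB v u

def psi (v : Fin (m + 3)) (p : Fin (m + 3) → ℕ) : ℕ :=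
  p v + (SA v p / 2 ^ (m + 2) + SB v p / 2 ^ (m + 2)) / 2

lemma wA_v (v : Fin (m+3)) : wA v v = 0 := if_pos rfl
lemma wB_v (v : Fin (m+3)) : wB v v = 0 := if_pos rfl

lemma wA_eq {v u : Fin (m + 3)} (h : u ≠ v) : wA v u = 2 ^ (m + 3 - pos v u) := if_neg h
lemma wB_eq {v u : Fin (m + 3)} (h : u ≠ v) : wB v u = 2 ^ (pos v u) := if_neg h

lemma wA_le {v u : Fin (m + 3)} (h : u ≠ v) : wA v u ≤ 2 ^ (m + 2) := by
  rw [wA_eq h]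
  exact Nat.pow_le_pow_right (by norm_num) (by have := pos_pos h; omega)

lemma wB_le {v u : Fin (m + 3)} (h : u ≠ v) : wB v u ≤ 2 ^ (m + 2) := by
  rw [wB_eq h]
  exact Nat.pow_le_pow_right (by norm_num) (by have := pos_lt v u; omega)

lemma pow_le_double {a b : ℕ} (h : a ≤ b + 1) : (2:ℕ) ^ a ≤ 2 * 2 ^ b := by
  calc (2:ℕ)^a ≤ 2^(b+1) := Nat.pow_le_pow_right (by norm_num) h
  _ = 2 * 2^b := by ring

-- arithmetic endgames
lemma arith_interior {pv qa qb qA qB : ℕ} (ha : qa ≤ qA) (hb : qb ≤ qB) :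
    pv + (qa + qb)/2 ≤ pv + (qA + qB)/2 := by omega

lemma arith_out {pv qa qb qA qB : ℕ} (h2 : 2 ≤ pv) (ha : qa ≤ qA + 1) (hb : qb ≤ qB + 1) :
    (pv - 2) + (qa + qb)/2 ≤ pv + (qA + qB)/2 := by omega

lemma arith_into {pv qa qb qA qB : ℕ} (ha : qA = qa + 2) (hb : qb ≤ qB) :
    (pv + 1) + (qa + qb)/2 ≤ pv + (qA + qB)/2 := by omega

lemma arith_into2 {pv qa qb qA qB : ℕ} (ha : qa + 1 ≤ qA) (hb : qb + 1 ≤ qB) :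
    (pv + 1) + (qa + qb)/2 ≤ pv + (qA + qB)/2 := by omega

lemma arith_src {pv qa qb qA qB : ℕ} (h1 : 1 ≤ pv) (ha : qa ≤ qA + 1) (hb : qb ≤ qB) :
    (pv - 1) + (qa + qb)/2 ≤ pv + (qA + qB)/2 := by omega

end TwoFriendsAux

-- psi_step
namespace TwoFriendsAux
variable {m : ℕ}

lemma div_le_div_add_one {a b M : ℕ} (hM : 0 < M) (h : a ≤ b + M) : a / M ≤ b / M + 1 := by
  calc a / M ≤ (b + M) / M := Nat.div_le_div_right h
  _ = b / M + 1 := Nat.add_div_right b hM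

lemma div_succ_le {a b M : ℕ} (hM : 0 < M) (h : a + M ≤ b) : a / M + 1 ≤ b / M := by
  calc a / M + 1 = (a + M) / M := (Nat.add_div_right a hM).symm
  _ ≤ b / M := Nat.div_le_div_right h

theorem psi_step {v : Fin (m+3)} {p p' : Fin (m+3) → ℕ}
    (h : RubblingStep (cycleGraph (m+3)) p p') : psi v p' ≤ psi v p := by
  have hM : 0 < 2^(m+2) := Nat.pow_pos (by norm_num)
  rcases h with ⟨x, u, hadj, hpx, rfl⟩ | ⟨x, y, u, hxy, hax, hay, hpx, hpy, rfl⟩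
  · -- pebbling move
    set p' : Fin (m+3) → ℕ := fun z => if z = x then p z - 2 else if z = u then p z + 1 else p z
      with hp'
    have hxu : x ≠ u := hadj.ne
    have HA : SA v p' + 2 * wA v x = SA v p + wA v u := by
      simp only [SA, hp']
      exact sum_move2 p (wA v) hxu hpx
    have HB : SB v p' + 2 * wB v x = SB v p + wB v u := by
      simp only [SB, hp']
      exact sum_move2 p (wB v) hxu hpx
    by_cases hxv : x = v
    · -- pebbling out of v
      rw [hxv] at HA HB hpx hadj
      have huv : u ≠ v := hadj.ne'
      have hpv' : p' v = p v - 2 := by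
        simp only [hp']
        rw [if_pos hxv.symm]
      have hA1 : SA v p' ≤ SA v p + 2^(m+2) := by
        have := wA_le huv
        rw [wA_v] at HA
        omega
      have hB1 : SB v p' ≤ SB v p + 2^(m+2) := by
        have := wB_le huv
        rw [wB_v] at HB
        omega
      rw [psi, psi, hpv']
      exact arith_out hpx (div_le_div_add_one hM hA1) (div_le_div_add_one hM hB1)
    · by_cases huv : u = v
      · -- pebbling into v
        rw [huv] at HA HB hadj
        rw [wA_v, add_zero] at HA
        rw [wB_v, add_zero] at HB
        have hvx : v ≠ x := fun e => hxv e.symm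
        have hpv' : p' v = p v + 1 := by
          simp only [hp']
          rw [if_neg hvx, if_pos huv.symm]
        rcases adj_v hadj.symm with h1 | h1
        · -- pos x = 1 : big wA, small wB
          have hwA : wA v x = 2^(m+2) := by
            rw [wA_eq hxv, h1]
            exact congrArg (fun t => 2^t) (by omega : m + 3 - 1 = m + 2)
          rw [psi, psi, hpv']
          have ha : SA v p / 2^(m+2) = SA v p' / 2^(m+2) + 2 := by
            rw [← HA, hwA, two_mul, ← add_assoc, Nat.add_div_right _ hM, Nat.add_div_right _ hM]
          have hb : SB v p' / 2^(m+2) ≤ SB v p / 2^(m+2) := by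
            apply Nat.div_le_div_right; omega
          exact arith_into ha hb
        · -- pos x = m+2 : big wB, small wA
          have hwB : wB v x = 2^(m+2) := by
            rw [wB_eq hxv, h1]
          rw [psi, psi, hpv']
          have hb : SB v p / 2^(m+2) = SB v p' / 2^(m+2) + 2 := by
            rw [← HB, hwB, two_mul, ← add_assoc, Nat.add_div_right _ hM, Nat.add_div_right _ hM]
          have ha : SA v p' / 2^(m+2) ≤ SA v p / 2^(m+2) := by
            apply Nat.div_le_div_right; omega
          have := arith_into (pv := p v) (qb := SA v p' / 2^(m+2)) hb ha
          omega
      · -- interior pebbling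
        have hpv' : p' v = p v := by
          simp only [hp']
          rw [if_neg (fun e => hxv e.symm), if_neg (fun e => huv e.symm)]
        have hpos := adj_pos hxv huv hadj
        have hx1 := pos_pos hxv
        have hu1 := pos_pos huv
        have hxlt := pos_lt v x
        have hult := pos_lt v u
        have hwa : wA v u ≤ 2 * wA v x := by
          rw [wA_eq huv, wA_eq hxv]
          exact pow_le_double (by omega)
        have hwb : wB v u ≤ 2 * wB v x := by
          rw [wB_eq huv, wB_eq hxv]
          exact pow_le_double (by omega)
        rw [psi, psi, hpv']
        exact arith_interior (Nat.div_le_div_right (by omega)) (Nat.div_le_div_right (by omega))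
  · -- strict rubbling move
    set p' : Fin (m+3) → ℕ := fun z => if z = x then p z - 1 else if z = y then p z - 1
        else if z = u then p z + 1 else p z with hp'
    have hxu : x ≠ u := hax.ne
    have hyu : y ≠ u := hay.ne
    have HA : SA v p' + wA v x + wA v y = SA v p + wA v u := by
      simp only [SA, hp']
      exact sum_move3 p (wA v) hxy hxu hyu hpx hpy
    have HB : SB v p' + wB v x + wB v y = SB v p + wB v u := by
      simp only [SB, hp']
      exact sum_move3 p (wB v) hxy hxu hyu hpx hpy
    by_cases huv : u = v
    · -- strict into v
      rw [huv] at HA HB hax hay hxu hyu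
      rw [wA_v] at HA
      rw [wB_v] at HB
      have hpv' : p' v = p v + 1 := by
        simp only [hp']
        rw [if_neg (Ne.symm hxu), if_neg (Ne.symm hyu), if_pos huv.symm]
      have hposx := adj_v hax.symm
      have hposy := adj_v hay.symm
      have hne : pos v x ≠ pos v y := fun e => hxy (pos_inj e)
      have hsum : wA v x + wA v y = 2^(m+2) + 2 ∧ wB v x + wB v y = 2^(m+2) + 2 := by
        rw [wA_eq hxu, wA_eq hyu, wB_eq hxu, wB_eq hyu]
        rcases hposx with h1 | h1 <;> rcases hposy with h2 | h2
        · exact absurd (h1.trans h2.symm) hne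
        · rw [h1, h2, show m + 3 - 1 = m + 2 from by omega,
            show m + 3 - (m+2) = 1 from by omega]
          constructor
          · norm_num
          · rw [add_comm]; norm_num
        · rw [h1, h2, show m + 3 - 1 = m + 2 from by omega,
            show m + 3 - (m+2) = 1 from by omega]
          constructor
          · rw [add_comm]; norm_num
          · norm_num
        · exact absurd (h1.trans h2.symm) hne
      rw [psi, psi, hpv']
      have ha : SA v p' / 2^(m+2) + 1 ≤ SA v p / 2^(m+2) :=
        div_succ_le hM (by omega)
      have hb : SB v p' / 2^(m+2) + 1 ≤ SB v p / 2^(m+2) :=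
        div_succ_le hM (by omega)
      exact arith_into2 ha hb
    · -- u ≠ v
      by_cases hxv : x = v
      · -- v = x is a source
        rw [hxv] at HA HB hax hpx hxy
        have hyv : y ≠ v := fun e => hxy (e.symm)
        have hpv' : p' v = p v - 1 := by
          simp only [hp']
          rw [if_pos hxv.symm]
        rw [wA_v] at HA
        rw [wB_v] at HB
        have hposu := adj_v hax
        have hposy := adj_pos hyv huv hay
        have hylt := pos_lt v y
        have hy1 := pos_pos hyv
        rcases hposu with h1 | h1
        · -- pos u = 1, pos y = 2
          have hy2 : pos v y = 2 := by omega
          have hA1 : SA v p' ≤ SA v p + 2^(m+2) := by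
            have : wA v u ≤ 2^(m+2) := wA_le huv
            omega
          have hB1 : SB v p' ≤ SB v p := by
            have h2 : wB v u = 2 := by rw [wB_eq huv, h1]; norm_num
            have h3 : wB v y = 4 := by rw [wB_eq hyv, hy2]; norm_num
            omega
          rw [psi, psi, hpv']
          exact arith_src hpx (div_le_div_add_one hM hA1) (Nat.div_le_div_right hB1)
        · -- pos u = m+2, pos y = m+1
          have hy2 : pos v y = m + 1 := by omega
          have hB1 : SB v p' ≤ SB v p + 2^(m+2) := by
            have : wB v u ≤ 2^(m+2) := wB_le huv
            omega
          have hA1 : SA v p' ≤ SA v p := by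
            have h2 : wA v u = 2 := by
              rw [wA_eq huv, h1, show m + 3 - (m+2) = 1 from by omega]; norm_num
            have h3 : wA v y = 4 := by
              rw [wA_eq hyv, hy2, show m + 3 - (m+1) = 2 from by omega]; norm_num
            omega
          rw [psi, psi, hpv']
          have := arith_src (pv := p v) (qa := SB v p' / 2^(m+2)) (qb := SA v p' / 2^(m+2))
            (qA := SB v p / 2^(m+2)) (qB := SA v p / 2^(m+2)) hpx
            (div_le_div_add_one hM hB1) (Nat.div_le_div_right hA1)
          omega
      · by_cases hyv : y = v
        · -- v = y is a source
          rw [hyv] at HA HB hay hpy hxy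
          have hpv' : p' v = p v - 1 := by
            simp only [hp']
            rw [if_neg (fun e => hxv e.symm), if_pos hyv.symm]
          rw [wA_v] at HA
          rw [wB_v] at HB
          have hposu := adj_v hay
          have hposx := adj_pos hxv huv hax
          have hxlt := pos_lt v x
          have hx1 := pos_pos hxv
          rcases hposu with h1 | h1
          · have hx2 : pos v x = 2 := by omega
            have hA1 : SA v p' ≤ SA v p + 2^(m+2) := by
              have : wA v u ≤ 2^(m+2) := wA_le huv
              omega
            have hB1 : SB v p' ≤ SB v p := by
              have h2 : wB v u = 2 := by rw [wB_eq huv, h1]; norm_num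
              have h3 : wB v x = 4 := by rw [wB_eq hxv, hx2]; norm_num
              omega
            rw [psi, psi, hpv']
            exact arith_src hpy (div_le_div_add_one hM hA1) (Nat.div_le_div_right hB1)
          · have hx2 : pos v x = m + 1 := by omega
            have hB1 : SB v p' ≤ SB v p + 2^(m+2) := by
              have : wB v u ≤ 2^(m+2) := wB_le huv
              omega
            have hA1 : SA v p' ≤ SA v p := by
              have h2 : wA v u = 2 := by
                rw [wA_eq huv, h1, show m + 3 - (m+2) = 1 from by omega]; norm_num
              have h3 : wA v x = 4 := by
                rw [wA_eq hxv, hx2, show m + 3 - (m+1) = 2 from by omega]; norm_num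
              omega
            rw [psi, psi, hpv']
            have := arith_src (pv := p v) (qa := SB v p' / 2^(m+2)) (qb := SA v p' / 2^(m+2))
              (qA := SB v p / 2^(m+2)) (qB := SA v p / 2^(m+2)) hpy
              (div_le_div_add_one hM hB1) (Nat.div_le_div_right hA1)
            omega
        · -- interior strict move
          have hpv' : p' v = p v := by
            simp only [hp']
            rw [if_neg (fun e => hxv e.symm), if_neg (fun e => hyv e.symm),
              if_neg (fun e => huv e.symm)]
          have hposx := adj_pos hxv huv hax
          have hposy := adj_pos hyv huv hay
          have hne : pos v x ≠ pos v y := fun e => hxy (pos_inj e)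
          have hx1 := pos_pos hxv
          have hy1 := pos_pos hyv
          have hu1 := pos_pos huv
          have hxlt := pos_lt v x
          have hylt := pos_lt v y
          have hult := pos_lt v u
          have hwa : wA v u ≤ wA v x + wA v y := by
            rw [wA_eq huv, wA_eq hxv, wA_eq hyv]
            rcases hposx with h1 | h1 <;> rcases hposy with h2 | h2
            · exact absurd (by omega : pos v x = pos v y) hne
            · have h3 : (2:ℕ) ^ (m + 3 - pos v u) ≤ 2 ^ (m + 3 - pos v x) :=
                Nat.pow_le_pow_right (by norm_num) (by omega)
              exact le_trans h3 (Nat.le_add_right _ _)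
            · have h3 : (2:ℕ) ^ (m + 3 - pos v u) ≤ 2 ^ (m + 3 - pos v y) :=
                Nat.pow_le_pow_right (by norm_num) (by omega)
              exact le_trans h3 (Nat.le_add_left _ _)
            · exact absurd (by omega : pos v x = pos v y) hne
          have hwb : wB v u ≤ wB v x + wB v y := by
            rw [wB_eq huv, wB_eq hxv, wB_eq hyv]
            rcases hposx with h1 | h1 <;> rcases hposy with h2 | h2
            · exact absurd (by omega : pos v x = pos v y) hne
            · have h3 : (2:ℕ) ^ (pos v u) ≤ 2 ^ (pos v y) :=
                Nat.pow_le_pow_right (by norm_num) (by omega)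
              exact le_trans h3 (Nat.le_add_left _ _)
            · have h3 : (2:ℕ) ^ (pos v u) ≤ 2 ^ (pos v x) :=
                Nat.pow_le_pow_right (by norm_num) (by omega)
              exact le_trans h3 (Nat.le_add_right _ _)
            · exact absurd (by omega : pos v x = pos v y) hne
          rw [psi, psi, hpv']
          exact arith_interior (Nat.div_le_div_right (by omega)) (Nat.div_le_div_right (by omega))

end TwoFriendsAux

namespace TwoFriendsAux
variable {m : ℕ}

theorem psi_reach {v : Fin (m+3)} {p r : Fin (m+3) → ℕ}
    (h : Relation.ReflTransGen (RubblingStep (cycleGraph (m+3))) p r) :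
    psi v r ≤ psi v p := by
  induction h with
  | refl => exact le_refl _
  | tail _ hstep ih => exact le_trans (psi_step hstep) ih

lemma sum_shift (v : Fin (m+3)) (f : Fin (m+3) → ℕ) :
    ∑ u, f u = ∑ i ∈ Finset.range (m+3), f (v + (i : Fin (m+3))) := by
  rw [← Fin.sum_univ_eq_sum_range (fun i => f (v + (i : Fin (m+3)))) (m+3)]
  rw [← Equiv.sum_comp (Equiv.addLeft v) f]
  apply Finset.sum_congr rfl
  intro i _
  simp [Equiv.addLeft, Fin.cast_val_eq_self]

lemma pos_shift (v : Fin (m+3)) {i : ℕ} (h : i < m + 3) :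
    pos v (v + (i : Fin (m+3))) = i := by
  unfold pos
  rw [add_sub_cancel_left]
  simp [Fin.val_natCast, Nat.mod_eq_of_lt h]

lemma shift_ne (v : Fin (m+3)) {i : ℕ} (h : i % (m+3) ≠ 0) : v + (i : Fin (m+3)) ≠ v := by
  intro e
  have h2 : (i : Fin (m+3)) = 0 := by
    have := congrArg (· - v) e
    simpa using this
  have := congrArg Fin.val h2
  simp [Fin.val_natCast] at this
  exact h this

lemma SA_eq (v : Fin (m+3)) (q : Fin (m+3) → ℕ) :
    SA v q = ∑ i ∈ Finset.Ico 1 (m+3), q (v + (i : Fin (m+3))) * 2^(m+3-i) := by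
  rw [SA, sum_shift v]
  rw [Finset.range_eq_Ico, Finset.sum_eq_sum_Ico_succ_bot (by omega : 0 < m + 3)]
  have h0 : ((0:ℕ) : Fin (m+3)) = 0 := by simp
  rw [h0, add_zero, wA_v, mul_zero, zero_add]
  apply Finset.sum_congr rfl
  intro i hi
  rw [Finset.mem_Ico] at hi
  have hne : v + (i : Fin (m+3)) ≠ v := shift_ne v (by rw [Nat.mod_eq_of_lt hi.2]; omega)
  rw [wA_eq hne, pos_shift v hi.2]

lemma SB_eq (v : Fin (m+3)) (q : Fin (m+3) → ℕ) :
    SB v q = ∑ i ∈ Finset.Ico 1 (m+3), q (v + (i : Fin (m+3))) * 2^i := by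
  rw [SB, sum_shift v]
  rw [Finset.range_eq_Ico, Finset.sum_eq_sum_Ico_succ_bot (by omega : 0 < m + 3)]
  have h0 : ((0:ℕ) : Fin (m+3)) = 0 := by simp
  rw [h0, add_zero, wB_v, mul_zero, zero_add]
  apply Finset.sum_congr rfl
  intro i hi
  rw [Finset.mem_Ico] at hi
  have hne : v + (i : Fin (m+3)) ≠ v := shift_ne v (by rw [Nat.mod_eq_of_lt hi.2]; omega)
  rw [wB_eq hne, pos_shift v hi.2]

lemma size_eq (v : Fin (m+3)) (q : Fin (m+3) → ℕ) :
    ∑ u, q u = q v + ∑ i ∈ Finset.Ico 1 (m+3), q (v + (i : Fin (m+3))) := by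
  rw [sum_shift v]
  rw [Finset.range_eq_Ico, Finset.sum_eq_sum_Ico_succ_bot (by omega : 0 < m + 3)]
  have h0 : ((0:ℕ) : Fin (m+3)) = 0 := by simp
  rw [h0, add_zero]

lemma geom_aux (a : ℕ) {b : ℕ} (hab : a ≤ b) (hbN : b ≤ m+3) :
    (∑ i ∈ Finset.Ico a b, 2^(m+3-i)) + 2^(m+3-b) * 2 = 2^(m+3-a) * 2 := by
  induction b, hab using Nat.le_induction with
  | base => simp
  | succ b hab ih =>
      have hb : b ≤ m+3 := by omega
      have e1 : (2:ℕ)^(m+3-(b+1)) * 2 = 2^(m+3-b) := by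
        rw [← pow_succ]
        exact congrArg (2 ^ ·) (by omega)
      rw [Finset.sum_Ico_succ_top hab, e1, add_assoc, ← mul_two]
      exact ih hb

lemma bound_core (c : ℕ → ℕ) (hc : ∀ i, c i ≤ 2) (k E : ℕ) (hk1 : 1 ≤ k) (hkN : k ≤ m+3)
    (hk0 : k < m+3 → c k = 0)
    (hpre : (∑ i ∈ Finset.Ico 1 k, c i * 2^(m+3-i)) ≤ (∑ i ∈ Finset.Ico 1 k, 2^(m+3-i)) + E) :
    (∑ i ∈ Finset.Ico 1 (m+3), c i * 2^(m+3-i)) + 2 ≤ 2^(m+2) * 2 + E := by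
  have hsplit : (∑ i ∈ Finset.Ico 1 k, c i * 2^(m+3-i))
      + ∑ i ∈ Finset.Ico k (m+3), c i * 2^(m+3-i)
      = ∑ i ∈ Finset.Ico 1 (m+3), c i * 2^(m+3-i) :=
    Finset.sum_Ico_consecutive _ hk1 hkN
  have hg1 : (∑ i ∈ Finset.Ico 1 k, 2^(m+3-i)) + 2^(m+3-k) * 2 = 2^(m+2) * 2 := by
    have hg := geom_aux 1 hk1 hkN
    rwa [show m+3-1 = m+2 from by omega] at hg
  rcases eq_or_lt_of_le hkN with hkeq | hklt
  · have hempty : ∑ i ∈ Finset.Ico k (m+3), c i * 2^(m+3-i) = 0 := by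
      rw [hkeq, Finset.Ico_self, Finset.sum_empty]
    have hx : (2:ℕ)^(m+3-k) * 2 = 2 := by
      rw [hkeq, Nat.sub_self, pow_zero, one_mul]
    omega
  · have hsplit2 : ∑ i ∈ Finset.Ico k (m+3), c i * 2^(m+3-i)
        = c k * 2^(m+3-k) + ∑ i ∈ Finset.Ico (k+1) (m+3), c i * 2^(m+3-i) :=
      Finset.sum_eq_sum_Ico_succ_bot hklt _
    rw [hk0 hklt, zero_mul, zero_add] at hsplit2
    have htail : ∑ i ∈ Finset.Ico (k+1) (m+3), c i * 2^(m+3-i)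
        ≤ 2 * ∑ i ∈ Finset.Ico (k+1) (m+3), 2^(m+3-i) := by
      rw [Finset.mul_sum]
      exact Finset.sum_le_sum (fun i _ => Nat.mul_le_mul_right _ (hc i))
    have hg2 := geom_aux (k+1) (hklt) (le_refl (m+3))
    rw [show m+3-(m+3) = 0 from by omega, pow_zero, one_mul] at hg2
    have hlink2 : (2:ℕ)^(m+3-(k+1)) * 2 = 2^(m+3-k) := by
      rw [← pow_succ]
      exact congrArg (2 ^ ·) (by omega)
    omega

end TwoFriendsAux

namespace TwoFriendsAux
variable {m : ℕ}

/-- `i` is a "two-friend position" for the sequence `c` of pebble counts. -/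
def TFpos (m : ℕ) (c : ℕ → ℕ) (i : ℕ) : Prop :=
  1 ≤ i ∧ i < m+3 ∧ (∀ j, 1 ≤ j → j < i → 1 ≤ c j) ∧ c i = 2

lemma bound_noTF (c : ℕ → ℕ) (hc : ∀ i, c i ≤ 2) (hno : ∀ i, ¬ TFpos m c i) :
    (∑ i ∈ Finset.Ico 1 (m+3), c i * 2^(m+3-i)) + 2 ≤ 2^(m+2) * 2 := by
  have hex : ∃ i, 1 ≤ i ∧ (i = m+3 ∨ c i ≠ 1) := ⟨m+3, by omega, Or.inl rfl⟩
  have hk := Nat.find_spec hex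
  set k := Nat.find hex with hkdef
  have hk1 : 1 ≤ k := hk.1
  have hkN : k ≤ m+3 := Nat.find_le ⟨by omega, Or.inl rfl⟩
  have hpre1 : ∀ j, 1 ≤ j → j < k → c j = 1 := by
    intro j h1 h2
    have hj := Nat.find_min hex h2
    push_neg at hj
    exact (hj h1).2
  have hk0 : k < m+3 → c k = 0 := by
    intro hlt
    have hne1 : c k ≠ 1 := by
      rcases hk.2 with h | h
      · omega
      · exact h
    by_contra h0
    have hck2 : c k = 2 := by have := hc k; omega
    exact hno k ⟨hk1, hlt, fun j a b => by rw [hpre1 j a b], hck2⟩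
  have hpre : (∑ i ∈ Finset.Ico 1 k, c i * 2^(m+3-i))
      ≤ (∑ i ∈ Finset.Ico 1 k, 2^(m+3-i)) + 0 := by
    rw [add_zero]
    apply le_of_eq
    apply Finset.sum_congr rfl
    intro i hi
    rw [Finset.mem_Ico] at hi
    rw [hpre1 i hi.1 hi.2, one_mul]
  simpa using bound_core c hc k 0 hk1 hkN hk0 hpre

lemma bound_oneTF (c : ℕ → ℕ) (hc : ∀ i, c i ≤ 2) (i₀ : ℕ) (hTF₀ : TFpos m c i₀)
    (huniq : ∀ i, TFpos m c i → i = i₀) :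
    (∑ i ∈ Finset.Ico 1 (m+3), c i * 2^(m+3-i)) + 2 ≤ 2^(m+2) * 2 + 2^(m+3-i₀) := by
  have hex : ∃ i, 1 ≤ i ∧ (i = m+3 ∨ c i = 0 ∨ (c i = 2 ∧ i ≠ i₀)) := ⟨m+3, by omega, Or.inl rfl⟩
  have hk := Nat.find_spec hex
  set k := Nat.find hex with hkdef
  have hk1 : 1 ≤ k := hk.1
  have hkN : k ≤ m+3 := Nat.find_le ⟨by omega, Or.inl rfl⟩
  have hpre1 : ∀ j, 1 ≤ j → j < k → c j = 1 ∨ (c j = 2 ∧ j = i₀) := by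
    intro j h1 h2
    have hj := Nat.find_min hex h2
    push_neg at hj
    obtain ⟨_, h3, h4⟩ := hj h1
    rcases eq_or_ne (c j) 2 with h5 | h5
    · exact Or.inr ⟨h5, h4 h5⟩
    · have := hc j
      left; omega
  have hk0 : k < m+3 → c k = 0 := by
    intro hlt
    rcases hk.2 with h | h | h
    · omega
    · exact h
    · exfalso
      have : TFpos m c k := by
        refine ⟨hk1, hlt, fun j a b => ?_, h.1⟩
        rcases hpre1 j a b with h6 | h6
        · omega
        · omega
      exact h.2 (huniq k this)
  have hpre : (∑ i ∈ Finset.Ico 1 k, c i * 2^(m+3-i))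
      ≤ (∑ i ∈ Finset.Ico 1 k, 2^(m+3-i)) + 2^(m+3-i₀) := by
    have hterm : ∀ i ∈ Finset.Ico 1 k,
        c i * 2^(m+3-i) ≤ 2^(m+3-i) + (if i = i₀ then 2^(m+3-i₀) else 0) := by
      intro i hi
      rw [Finset.mem_Ico] at hi
      rcases hpre1 i hi.1 hi.2 with h6 | ⟨h6, h7⟩
      · rw [h6, one_mul]
        exact Nat.le_add_right _ _
      · subst h7
        rw [h6, if_pos rfl, two_mul]
    calc (∑ i ∈ Finset.Ico 1 k, c i * 2^(m+3-i))
        ≤ ∑ i ∈ Finset.Ico 1 k, (2^(m+3-i) + (if i = i₀ then 2^(m+3-i₀) else 0)) :=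
          Finset.sum_le_sum hterm
      _ = (∑ i ∈ Finset.Ico 1 k, 2^(m+3-i))
          + ∑ i ∈ Finset.Ico 1 k, (if i = i₀ then 2^(m+3-i₀) else 0) :=
          Finset.sum_add_distrib
      _ ≤ (∑ i ∈ Finset.Ico 1 k, 2^(m+3-i)) + 2^(m+3-i₀) := by
          apply Nat.add_le_add_left
          rw [Finset.sum_ite_eq' _ i₀ (fun _ => 2^(m+3-i₀))]
          split
          · exact le_refl _
          · exact Nat.zero_le _
  exact bound_core c hc k (2^(m+3-i₀)) hk1 hkN hk0 hpre

end TwoFriendsAux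

section Walks
open SimpleGraph
variable {V : Type*} {G : SimpleGraph V}

lemma walk_exists (G : SimpleGraph V) :
    ∀ (k : ℕ) (f : ℕ → V), (∀ j, j < k → G.Adj (f j) (f (j+1))) →
      (∀ j1 j2, j1 ≤ k → j2 ≤ k → f j1 = f j2 → j1 = j2) →
      ∃ P : G.Walk (f 0) (f k), P.IsPath ∧ ∀ u ∈ P.support, ∃ j, j ≤ k ∧ u = f j := by
  intro k
  induction k with
  | zero =>
      intro f _ _
      refine ⟨Walk.nil, Walk.IsPath.nil, ?_⟩
      intro u hu
      simp only [Walk.support_nil, List.mem_singleton] at hu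
      exact ⟨0, le_refl 0, hu⟩
  | succ k ih =>
      intro f hadj hinj
      obtain ⟨P, hP, hsupp⟩ := ih (fun j => f (j+1))
        (fun j hj => hadj (j+1) (by omega))
        (fun j1 j2 h1 h2 he => by
          have := hinj (j1+1) (j2+1) (by omega) (by omega) he
          omega)
      refine ⟨Walk.cons (hadj 0 (by omega)) P, ?_, ?_⟩
      · rw [Walk.cons_isPath_iff]
        refine ⟨hP, fun hmem => ?_⟩
        obtain ⟨j, hj, he⟩ := hsupp _ hmem
        exact absurd (hinj 0 (j+1) (by omega) (by omega) he) (by omega)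
      · intro u hu
        rw [Walk.support_cons, List.mem_cons] at hu
        rcases hu with h | h
        · exact ⟨0, by omega, h⟩
        · obtain ⟨j, hj, he⟩ := hsupp u h
          exact ⟨j+1, by omega, he⟩

end Walks

namespace TwoFriendsAux
variable {m : ℕ}

lemma friends_of_chain (q : Fin (m+3) → ℕ) (v : Fin (m+3)) (f : ℕ → Fin (m+3)) (k : ℕ)
    (hf0 : f 0 = v) (hk : 1 ≤ k)
    (hadj : ∀ j, j < k → (cycleGraph (m+3)).Adj (f j) (f (j+1)))
    (hinj : ∀ j1 j2, j1 ≤ k → j2 ≤ k → f j1 = f j2 → j1 = j2)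
    (hocc : ∀ j, 1 ≤ j → j < k → 1 ≤ q (f j)) :
    Friends (cycleGraph (m+3)) q v (f k) := by
  subst hf0
  obtain ⟨P, hP, hsupp⟩ := walk_exists (cycleGraph (m+3)) k f hadj hinj
  constructor
  · intro he
    exact absurd (hinj 0 k (by omega) (le_refl k) he) (by omega)
  · refine ⟨P, hP, ?_⟩
    intro u hu hne1 hne2
    obtain ⟨j, hj, he⟩ := hsupp u hu
    subst he
    have hj0 : j ≠ 0 := by
      intro e; subst e; exact hne1 rfl
    have hjk : j ≠ k := by
      intro e; subst e; exact hne2 rfl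
    exact hocc j (by omega) (by omega)

end TwoFriendsAux

namespace TwoFriendsAux
variable {m : ℕ}

lemma cast_inj_small {i1 i2 : ℕ} (h1 : i1 < m+3) (h2 : i2 < m+3)
    (h : (i1 : Fin (m+3)) = (i2 : Fin (m+3))) : i1 = i2 := by
  have h3 := congrArg Fin.val h
  simpa [Fin.val_natCast, Nat.mod_eq_of_lt h1, Nat.mod_eq_of_lt h2] using h3

lemma cast_sub_eq_neg {j : ℕ} (hj : j ≤ m+3) :
    ((m+3-j : ℕ) : Fin (m+3)) = - (j : Fin (m+3)) := by
  apply eq_neg_of_add_eq_zero_right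
  rw [← Nat.cast_add]
  rw [show j + (m+3-j) = m+3 from by omega]
  exact Fin.natCast_self (m+3)

lemma sub_cast_eq_add {i : ℕ} (hi : i ≤ m+3) :
    v - ((m+3-i : ℕ) : Fin (m+3)) = v + (i : Fin (m+3)) := by
  rw [cast_sub_eq_neg hi, sub_neg_eq_add]

lemma SB_eq' (v : Fin (m+3)) (q : Fin (m+3) → ℕ) :
    SB v q = ∑ i ∈ Finset.Ico 1 (m+3), q (v - (i : Fin (m+3))) * 2^(m+3-i) := by
  rw [SB_eq]
  apply Finset.sum_nbij' (fun i => m+3-i) (fun i => m+3-i)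
  · intro a ha
    rw [Finset.mem_Ico] at *
    omega
  · intro a ha
    rw [Finset.mem_Ico] at *
    omega
  · intro a ha
    rw [Finset.mem_Ico] at ha
    omega
  · intro a ha
    rw [Finset.mem_Ico] at ha
    omega
  · intro a ha
    rw [Finset.mem_Ico] at ha
    have h1 : v - ((m+3-a : ℕ) : Fin (m+3)) = v + (a : Fin (m+3)) :=
      sub_cast_eq_add (by omega)
    rw [h1, show m+3-(m+3-a) = a from by omega]

lemma adj_succ_cw (v : Fin (m+3)) (j : ℕ) :
    (cycleGraph (m+3)).Adj (v + (j : Fin (m+3))) (v + ((j+1 : ℕ) : Fin (m+3))) := by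
  rw [cycleGraph_adj']
  right
  have : (v + ((j+1 : ℕ) : Fin (m+3))) - (v + (j : Fin (m+3))) = 1 := by
    push_cast
    ring
  rw [this, val_one']

lemma adj_succ_ccw (v : Fin (m+3)) (j : ℕ) :
    (cycleGraph (m+3)).Adj (v - (j : Fin (m+3))) (v - ((j+1 : ℕ) : Fin (m+3))) := by
  rw [cycleGraph_adj']
  left
  have : (v - (j : Fin (m+3))) - (v - ((j+1 : ℕ) : Fin (m+3))) = 1 := by
    push_cast
    ring
  rw [this, val_one']

end TwoFriendsAux


open TwoFriendsAux

/-- In a 2-solvable distribution of size `n - 1` on the cycle `C_n` with at most two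
pebbles on each vertex, every unoccupied vertex has two distinct friends, each of which
carries exactly two pebbles. -/
theorem unoccupied_has_two_friends (n : ℕ) (hn : 3 ≤ n) (q : Fin n → ℕ)
    (hsolv : ∀ u, KReachable (cycleGraph n) q u 2)
    (hsize : ∑ v, q v = n - 1) (hle : ∀ u, q u ≤ 2) :
    ∀ v, q v = 0 → ∃ a b, a ≠ b ∧ Friends (cycleGraph n) q v a ∧
      Friends (cycleGraph n) q v b ∧ q a = 2 ∧ q b = 2 := by
  obtain ⟨m, rfl⟩ : ∃ m, n = m + 3 := ⟨n - 3, by omega⟩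
  intro v hv
  by_contra hcon
  push_neg at hcon
  have hM : 0 < 2^(m+2) := Nat.pow_pos (by norm_num)
  set cA : ℕ → ℕ := fun i => q (v + (i : Fin (m+3))) with hcA
  set cB : ℕ → ℕ := fun i => q (v - (i : Fin (m+3))) with hcB
  have hcA2 : ∀ i, cA i ≤ 2 := fun i => hle _
  have hcB2 : ∀ i, cB i ≤ 2 := fun i => hle _
  -- two-friend positions give actual friends carrying two pebbles
  have hFA : ∀ i, TFpos m cA i → Friends (cycleGraph (m+3)) q v (v + (i : Fin (m+3))) := by
    rintro i ⟨hi1, hi2, hpre, _⟩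
    exact friends_of_chain q v (fun j => v + (j : Fin (m+3))) i (by simp) hi1
      (fun j _ => adj_succ_cw v j)
      (fun j1 j2 h1 h2 he => by
        have h3 : ((j1:ℕ) : Fin (m+3)) = ((j2:ℕ) : Fin (m+3)) := add_left_cancel he
        exact cast_inj_small (by omega) (by omega) h3)
      (fun j ha hb => hpre j ha hb)
  have hFB : ∀ i, TFpos m cB i → Friends (cycleGraph (m+3)) q v (v - (i : Fin (m+3))) := by
    rintro i ⟨hi1, hi2, hpre, _⟩
    exact friends_of_chain q v (fun j => v - (j : Fin (m+3))) i (by simp) hi1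
      (fun j _ => adj_succ_ccw v j)
      (fun j1 j2 h1 h2 he => by
        have h3 : ((j1:ℕ) : Fin (m+3)) = ((j2:ℕ) : Fin (m+3)) := sub_right_injective he
        exact cast_inj_small (by omega) (by omega) h3)
      (fun j ha hb => hpre j ha hb)
  -- uniqueness of two-friend positions on each side
  have hAuniq : ∀ i1 i2, TFpos m cA i1 → TFpos m cA i2 → i1 = i2 := by
    intro i1 i2 h1 h2
    by_contra hne
    have hv1 : v + ((i1 : ℕ) : Fin (m+3)) ≠ v + ((i2 : ℕ) : Fin (m+3)) := by
      intro e
      exact hne (cast_inj_small h1.2.1 h2.2.1 (add_left_cancel e))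
    exact hcon _ _ hv1 (hFA _ h1) (hFA _ h2) h1.2.2.2 h2.2.2.2
  have hBuniq : ∀ i1 i2, TFpos m cB i1 → TFpos m cB i2 → i1 = i2 := by
    intro i1 i2 h1 h2
    by_contra hne
    have hv1 : v - ((i1 : ℕ) : Fin (m+3)) ≠ v - ((i2 : ℕ) : Fin (m+3)) := by
      intro e
      exact hne (cast_inj_small h1.2.1 h2.2.1 (sub_right_injective e))
    exact hcon _ _ hv1 (hFB _ h1) (hFB _ h2) h1.2.2.2 h2.2.2.2
  -- not both sides can have a two-friend position
  have hcross : ∀ i j, TFpos m cA i → TFpos m cB j → False := by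
    intro i j hi hj
    by_cases he : v + ((i : ℕ) : Fin (m+3)) = v - ((j : ℕ) : Fin (m+3))
    · -- the shared vertex forces everything occupied, contradicting the size
      have hij : i + j = m + 3 := by
        have h0 : ((i + j : ℕ) : Fin (m+3)) = 0 := by
          push_cast
          have h1 : ((i : ℕ) : Fin (m+3)) = - ((j : ℕ) : Fin (m+3)) := by
            have := congrArg (fun z => z - v) he
            simpa [add_sub_cancel_left, sub_sub_cancel_left] using this
          rw [h1]
          ring
        have h2 := congrArg Fin.val h0
        simp only [Fin.val_natCast, Fin.val_zero] at h2
        have hi1 := hi.1; have hi2 := hi.2.1; have hj1 := hj.1; have hj2 := hj.2.1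
        rcases lt_or_ge (i+j) (m+3) with hlt | hge
        · rw [Nat.mod_eq_of_lt hlt] at h2
          omega
        · rw [Nat.mod_eq_sub_mod hge, Nat.mod_eq_of_lt (by omega)] at h2
          omega
      have hocc : ∀ t, 1 ≤ t → t < m+3 → 1 ≤ cA t := by
        intro t h1 h2
        rcases lt_trichotomy t i with h | h | h
        · exact hi.2.2.1 t h1 h
        · rw [h, hi.2.2.2]; omega
        · have h3 : 1 ≤ m+3-t := by omega
          have h4 : m+3-t < j := by omega
          have h5 := hj.2.2.1 (m+3-t) h3 h4
          have h6 : v - ((m+3-t : ℕ) : Fin (m+3)) = v + ((t : ℕ) : Fin (m+3)) :=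
            sub_cast_eq_add (by omega)
          simpa [hcB, hcA, h6] using h5
      have hocc0 : 1 ≤ cA i := by rw [hi.2.2.2]; omega
      -- total size at least m+3
      have hsum := size_eq v q
      have hbig : (m+2) + 1 ≤ ∑ t ∈ Finset.Ico 1 (m+3), cA t := by
        have hstep : ∀ t ∈ Finset.Ico 1 (m+3),
            1 + (if t = i then 1 else 0) ≤ cA t := by
          intro t ht
          rw [Finset.mem_Ico] at ht
          split
          · next hti => rw [hti, hi.2.2.2]
          · simpa using hocc t ht.1 ht.2
        calc (m+2) + 1
            = ∑ t ∈ Finset.Ico 1 (m+3), (1 : ℕ) + ∑ t ∈ Finset.Ico 1 (m+3), (if t = i then 1 else 0) := by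
              rw [Finset.sum_const, Nat.card_Ico, Finset.sum_ite_eq' _ i (fun _ => 1)]
              rw [if_pos (by rw [Finset.mem_Ico]; exact ⟨hi.1, hi.2.1⟩)]
              simp
          _ = ∑ t ∈ Finset.Ico 1 (m+3), ((1:ℕ) + (if t = i then 1 else 0)) :=
              Finset.sum_add_distrib.symm
          _ ≤ ∑ t ∈ Finset.Ico 1 (m+3), cA t := Finset.sum_le_sum hstep
      rw [hv, zero_add] at hsum
      rw [hsum] at hsize
      simp only [hcA] at hbig
      omega
    · exact absurd hj.2.2.2 (hcon _ _ he (hFA _ hi) (hFB _ hj) hi.2.2.2)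
  -- bounds on the two weights
  have hSA : SA v q / 2^(m+2) ≤ 2 := by
    have heq : SA v q = ∑ i ∈ Finset.Ico 1 (m+3), cA i * 2^(m+3-i) := SA_eq v q
    by_cases hA : ∃ i, TFpos m cA i
    · obtain ⟨i₀, hi₀⟩ := hA
      have hb := bound_oneTF cA hcA2 i₀ hi₀ (fun i h => hAuniq i i₀ h hi₀)
      have hpow : (2:ℕ)^(m+3-i₀) ≤ 2^(m+2) :=
        Nat.pow_le_pow_right (by norm_num) (by have := hi₀.1; omega)
      have hlt : SA v q < 3 * 2^(m+2) := by
        rw [heq]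
        calc (∑ i ∈ Finset.Ico 1 (m+3), cA i * 2^(m+3-i))
            < (∑ i ∈ Finset.Ico 1 (m+3), cA i * 2^(m+3-i)) + 2 := by omega
          _ ≤ 2^(m+2) * 2 + 2^(m+3-i₀) := hb
          _ ≤ 2^(m+2) * 2 + 2^(m+2) := by omega
          _ = 3 * 2^(m+2) := by ring
      have := (Nat.div_lt_iff_lt_mul hM).mpr (by rw [mul_comm] at hlt ⊢; exact hlt)
      omega
    · push_neg at hA
      have hb := bound_noTF cA hcA2 hA
      have hlt : SA v q < 3 * 2^(m+2) := by
        rw [heq]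
        calc (∑ i ∈ Finset.Ico 1 (m+3), cA i * 2^(m+3-i))
            < (∑ i ∈ Finset.Ico 1 (m+3), cA i * 2^(m+3-i)) + 2 := by omega
          _ ≤ 2^(m+2) * 2 := hb
          _ ≤ 3 * 2^(m+2) := by omega
      have := (Nat.div_lt_iff_lt_mul hM).mpr (by rw [mul_comm] at hlt ⊢; exact hlt)
      omega
  have hSB : SB v q / 2^(m+2) ≤ 2 := by
    have heq : SB v q = ∑ i ∈ Finset.Ico 1 (m+3), cB i * 2^(m+3-i) := SB_eq' v q
    by_cases hB : ∃ i, TFpos m cB i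
    · obtain ⟨i₀, hi₀⟩ := hB
      have hb := bound_oneTF cB hcB2 i₀ hi₀ (fun i h => hBuniq i i₀ h hi₀)
      have hpow : (2:ℕ)^(m+3-i₀) ≤ 2^(m+2) :=
        Nat.pow_le_pow_right (by norm_num) (by have := hi₀.1; omega)
      have hlt : SB v q < 3 * 2^(m+2) := by
        rw [heq]
        calc (∑ i ∈ Finset.Ico 1 (m+3), cB i * 2^(m+3-i))
            < (∑ i ∈ Finset.Ico 1 (m+3), cB i * 2^(m+3-i)) + 2 := by omega
          _ ≤ 2^(m+2) * 2 + 2^(m+3-i₀) := hb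
          _ ≤ 2^(m+2) * 2 + 2^(m+2) := by omega
          _ = 3 * 2^(m+2) := by ring
      have := (Nat.div_lt_iff_lt_mul hM).mpr (by rw [mul_comm] at hlt ⊢; exact hlt)
      omega
    · push_neg at hB
      have hb := bound_noTF cB hcB2 hB
      have hlt : SB v q < 3 * 2^(m+2) := by
        rw [heq]
        calc (∑ i ∈ Finset.Ico 1 (m+3), cB i * 2^(m+3-i))
            < (∑ i ∈ Finset.Ico 1 (m+3), cB i * 2^(m+3-i)) + 2 := by omega
          _ ≤ 2^(m+2) * 2 := hb
          _ ≤ 3 * 2^(m+2) := by omega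
      have := (Nat.div_lt_iff_lt_mul hM).mpr (by rw [mul_comm] at hlt ⊢; exact hlt)
      omega
  -- at least one of the two sides has no two-friend position, giving the sharper bound
  have hone : SA v q / 2^(m+2) ≤ 1 ∨ SB v q / 2^(m+2) ≤ 1 := by
    by_cases hA : ∃ i, TFpos m cA i
    · right
      obtain ⟨i₀, hi₀⟩ := hA
      have hB : ∀ i, ¬ TFpos m cB i := fun i h => hcross i₀ i hi₀ h
      have hb := bound_noTF cB hcB2 hB
      have heq : SB v q = ∑ i ∈ Finset.Ico 1 (m+3), cB i * 2^(m+3-i) := SB_eq' v q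
      have hlt : SB v q < 2 * 2^(m+2) := by
        rw [heq]
        calc (∑ i ∈ Finset.Ico 1 (m+3), cB i * 2^(m+3-i))
            < (∑ i ∈ Finset.Ico 1 (m+3), cB i * 2^(m+3-i)) + 2 := by omega
          _ ≤ 2^(m+2) * 2 := hb
          _ = 2 * 2^(m+2) := by ring
      have := (Nat.div_lt_iff_lt_mul hM).mpr (by rw [mul_comm] at hlt ⊢; exact hlt)
      omega
    · left
      push_neg at hA
      have hb := bound_noTF cA hcA2 hA
      have heq : SA v q = ∑ i ∈ Finset.Ico 1 (m+3), cA i * 2^(m+3-i) := SA_eq v q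
      have hlt : SA v q < 2 * 2^(m+2) := by
        rw [heq]
        calc (∑ i ∈ Finset.Ico 1 (m+3), cA i * 2^(m+3-i))
            < (∑ i ∈ Finset.Ico 1 (m+3), cA i * 2^(m+3-i)) + 2 := by omega
          _ ≤ 2^(m+2) * 2 := hb
          _ = 2 * 2^(m+2) := by ring
      have := (Nat.div_lt_iff_lt_mul hM).mpr (by rw [mul_comm] at hlt ⊢; exact hlt)
      omega
  -- hence the potential of q is at most 1
  have hpsi : psi v q ≤ 1 := by
    rw [psi, hv]
    rcases hone with h | h <;> omega
  -- but 2-reachability of v forces potential at least 2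
  obtain ⟨r, hreach, hr⟩ := hsolv v
  have h2 : (2:ℕ) ≤ psi v r := le_trans hr (Nat.le_add_right _ _)
  have h3 : psi v r ≤ psi v q := psi_reach hreach
  omega
end

section
/- Let n ≥ 5 and let p be an optimal pebble distribution on the n-prism C_n□P_2 (a solvable distribution of minimum size). Then there exists a rung, i.e. a pair {(i,1),(i,2)} of vertices with the same cycle coordinate, that is not 2-reachable from p (there is no executable rubbling sequence after which the two vertices of the rung together carry at least 2 pebbles). -/
open SimpleGraph

/-- The `n`-prism `C_n □ P_2`. -/
def prism (n : ℕ) : SimpleGraph (Fin n × Fin 2) :=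
  cycleGraph n □ pathGraph 2

/-! ### Auxiliary development -/

open Finset

theorem valAdd1 (n : ℕ) (hn : 5 ≤ n) [NeZero n] (k : Fin n) :
    (k + 1).val = if k.val + 1 = n then 0 else k.val + 1 := by
  have hk := k.isLt
  have h1 : (1 : ℕ) % n = 1 := Nat.mod_eq_of_lt (by omega)
  rw [Fin.add_def, Fin.val_one']
  show (k.val + 1 % n) % n = _
  rw [h1]
  rcases eq_or_ne (k.val + 1) n with h | h
  · rw [if_pos h, h, Nat.mod_self]
  · rw [if_neg h, Nat.mod_eq_of_lt (by omega)]

theorem valSub1 (n : ℕ) (hn : 5 ≤ n) [NeZero n] (k : Fin n) :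
    (k - 1).val = if k.val = 0 then n - 1 else k.val - 1 := by
  have hk := k.isLt
  have h1 : (1 : ℕ) % n = 1 := Nat.mod_eq_of_lt (by omega)
  rw [Fin.sub_def, Fin.val_one']
  show (n - 1 % n + k.val) % n = _
  rw [h1]
  rcases eq_or_ne k.val 0 with h | h
  · rw [if_pos h, h, Nat.add_zero, Nat.mod_eq_of_lt (by omega)]
  · rw [if_neg h]
    have h2 : n - 1 + k.val = (k.val - 1) + n := by omega
    rw [h2, Nat.add_mod_right, Nat.mod_eq_of_lt (by omega)]

def gdist (n k : ℕ) : ℕ := min k (n - k)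

theorem gdist_lip_add (n : ℕ) (hn : 5 ≤ n) [NeZero n] (k : Fin n) :
    gdist n k.val ≤ gdist n ((k + 1).val) + 1 := by
  have hk := k.isLt
  rw [valAdd1 n hn]
  unfold gdist
  split <;> omega

theorem gdist_lip_sub (n : ℕ) (hn : 5 ≤ n) [NeZero n] (k : Fin n) :
    gdist n k.val ≤ gdist n ((k - 1).val) + 1 := by
  have hk := k.isLt
  rw [valSub1 n hn]
  unfold gdist
  split <;> omega

theorem gdist_dec (n : ℕ) (hn : 5 ≤ n) [NeZero n] (k : Fin n) (hk0 : k.val ≠ 0) :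
    gdist n ((k - 1).val) + 1 ≤ gdist n k.val ∨ gdist n ((k + 1).val) + 1 ≤ gdist n k.val := by
  have hk := k.isLt
  rw [valSub1 n hn, valAdd1 n hn]
  unfold gdist
  split <;> split <;> omega

noncomputable def cwt (n : ℕ) [NeZero n] (i j : Fin n) : ℚ := (2⁻¹ : ℚ) ^ gdist n (i - j).val

theorem cwt_nonneg (n : ℕ) [NeZero n] (i j : Fin n) : 0 ≤ cwt n i j := by
  unfold cwt; positivity

theorem cwt_self (n : ℕ) [NeZero n] (i : Fin n) : cwt n i i = 1 := by
  unfold cwt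
  rw [sub_self]
  show (2⁻¹:ℚ) ^ gdist n 0 = 1
  unfold gdist
  simp

theorem halfpow_mono {a b : ℕ} (h : a ≤ b) : (2⁻¹:ℚ) ^ b ≤ (2⁻¹:ℚ) ^ a :=
  pow_le_pow_of_le_one (by norm_num) (by norm_num) h

theorem halfpow_le {a b : ℕ} (h : b ≤ a + 1) : (2⁻¹:ℚ) ^ a ≤ 2 * (2⁻¹:ℚ) ^ b := by
  have h1 : (2⁻¹:ℚ) ^ a = 2 * (2⁻¹:ℚ) ^ (a + 1) := by
    rw [pow_succ]; ring
  rw [h1]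
  have h2 := halfpow_mono h
  linarith

theorem cwt_adj (n : ℕ) (hn : 5 ≤ n) [NeZero n] {v u : Fin n × Fin 2}
    (h : (prism n).Adj v u) (i : Fin n) : cwt n i u.1 ≤ 2 * cwt n i v.1 := by
  rcases h with ⟨hc, _⟩ | ⟨_, he⟩
  · rcases cycleGraph_adj'.mp hc with h1 | h1
    · -- (v.1 - u.1).val = 1, so v.1 = u.1 + 1, u.1 = v.1 - 1
      have hvu : v.1 - u.1 = 1 := by
        apply Fin.ext
        rw [h1, Fin.val_one', Nat.mod_eq_of_lt (by omega)]
      have hu : u.1 = v.1 - 1 := by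
        have := sub_eq_iff_eq_add.mp hvu
        rw [this]; abel
      have hk : i - u.1 = (i - v.1) + 1 := by rw [hu]; abel
      unfold cwt
      rw [hk]
      exact halfpow_le (gdist_lip_add n hn (i - v.1))
    · have hvu : u.1 - v.1 = 1 := by
        apply Fin.ext
        rw [h1, Fin.val_one', Nat.mod_eq_of_lt (by omega)]
      have hu : u.1 = v.1 + 1 := by
        have := sub_eq_iff_eq_add.mp hvu
        rw [this]; abel
      have hk : i - u.1 = (i - v.1) - 1 := by rw [hu]; abel
      unfold cwt
      rw [hk]
      exact halfpow_le (gdist_lip_sub n hn (i - v.1))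
  · rw [← he]
    have := cwt_nonneg n i v.1
    linarith

noncomputable def wsum (n : ℕ) [NeZero n] (p : Fin n × Fin 2 → ℕ) (i : Fin n) : ℚ :=
  ∑ v : Fin n × Fin 2, (p v : ℚ) * cwt n i v.1

theorem sum_indicator {α : Type*} [Fintype α] [DecidableEq α] (a : α) (c : ℚ) (f : α → ℚ) :
    ∑ x : α, (if x = a then c else 0) * f x = c * f a := by
  simp [ite_mul]

theorem wsum_step (n : ℕ) (hn : 5 ≤ n) [NeZero n] {p q : Fin n × Fin 2 → ℕ}
    (h : RubblingStep (prism n) p q) (i : Fin n) : wsum n q i ≤ wsum n p i := by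
  rcases h with ⟨v, u, hadj, h2, hq⟩ | ⟨v, w, u, hvw, hadj1, hadj2, hp1, hp2, hq⟩
  · have hvu : v ≠ u := (prism n).ne_of_adj hadj
    have hcast : ∀ x, (q x : ℚ) =
        (p x : ℚ) + ((if x = v then (-2:ℚ) else 0) + (if x = u then (1:ℚ) else 0)) := by
      intro x
      subst hq
      by_cases hxv : x = v
      · simp only [hxv, if_pos rfl, if_neg hvu]
        push_cast [Nat.cast_sub h2]
        ring
      · by_cases hxu : x = u
        · simp only [hxu, if_neg (hxu ▸ hxv), if_pos rfl]
          push_cast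
          ring
        · simp only [if_neg hxv, if_neg hxu]
          ring
    have key : wsum n q i = wsum n p i + (-2 * cwt n i v.1 + 1 * cwt n i u.1) := by
      unfold wsum
      calc ∑ x : Fin n × Fin 2, (q x : ℚ) * cwt n i x.1
          = ∑ x : Fin n × Fin 2, ((p x : ℚ) * cwt n i x.1
            + ((if x = v then (-2:ℚ) else 0) * cwt n i x.1
              + (if x = u then (1:ℚ) else 0) * cwt n i x.1)) := by
            apply Finset.sum_congr rfl
            intro x _
            rw [hcast x]; ring
        _ = _ := by
            rw [Finset.sum_add_distrib, Finset.sum_add_distrib]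
            rw [show (∑ x : Fin n × Fin 2, (if x = v then (-2:ℚ) else 0) * cwt n i x.1)
                = -2 * cwt n i v.1 from sum_indicator v (-2) _]
            rw [show (∑ x : Fin n × Fin 2, (if x = u then (1:ℚ) else 0) * cwt n i x.1)
                = 1 * cwt n i u.1 from sum_indicator u 1 _]
    rw [key]
    have hle := cwt_adj n hn hadj i
    linarith
  · have hvu : v ≠ u := (prism n).ne_of_adj hadj1
    have hwu : w ≠ u := (prism n).ne_of_adj hadj2
    have hcast : ∀ x, (q x : ℚ) =
        (p x : ℚ) + ((if x = v then (-1:ℚ) else 0) + ((if x = w then (-1:ℚ) else 0)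
          + (if x = u then (1:ℚ) else 0))) := by
      intro x
      subst hq
      by_cases hxv : x = v
      · simp only [hxv, if_pos rfl, if_neg hvw, if_neg hvu]
        push_cast [Nat.cast_sub hp1]
        ring
      · by_cases hxw : x = w
        · simp only [hxw, if_neg (hxw ▸ hxv), if_pos rfl, if_neg hwu]
          push_cast [Nat.cast_sub hp2]
          ring
        · by_cases hxu : x = u
          · simp only [hxu, if_neg (hxu ▸ hxv), if_neg (hxu ▸ hxw), if_pos rfl]
            push_cast
            ring
          · simp only [if_neg hxv, if_neg hxw, if_neg hxu]
            ring
    have key : wsum n q i = wsum n p i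
        + (-1 * cwt n i v.1 + (-1 * cwt n i w.1 + 1 * cwt n i u.1)) := by
      unfold wsum
      calc ∑ x : Fin n × Fin 2, (q x : ℚ) * cwt n i x.1
          = ∑ x : Fin n × Fin 2, ((p x : ℚ) * cwt n i x.1
            + ((if x = v then (-1:ℚ) else 0) * cwt n i x.1
              + ((if x = w then (-1:ℚ) else 0) * cwt n i x.1
                + (if x = u then (1:ℚ) else 0) * cwt n i x.1))) := by
            apply Finset.sum_congr rfl
            intro x _
            rw [hcast x]; ring
        _ = _ := by
            rw [Finset.sum_add_distrib, Finset.sum_add_distrib, Finset.sum_add_distrib]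
            rw [show (∑ x : Fin n × Fin 2, (if x = v then (-1:ℚ) else 0) * cwt n i x.1)
                = -1 * cwt n i v.1 from sum_indicator v (-1) _]
            rw [show (∑ x : Fin n × Fin 2, (if x = w then (-1:ℚ) else 0) * cwt n i x.1)
                = -1 * cwt n i w.1 from sum_indicator w (-1) _]
            rw [show (∑ x : Fin n × Fin 2, (if x = u then (1:ℚ) else 0) * cwt n i x.1)
                = 1 * cwt n i u.1 from sum_indicator u 1 _]
    rw [key]
    have hle1 := cwt_adj n hn hadj1 i
    have hle2 := cwt_adj n hn hadj2 i
    linarith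

theorem wsum_reach (n : ℕ) (hn : 5 ≤ n) [NeZero n] {p q : Fin n × Fin 2 → ℕ}
    (h : RubblingReach (prism n) p q) (i : Fin n) : wsum n q i ≤ wsum n p i := by
  induction h with
  | refl => exact le_refl _
  | tail _ hstep ih => exact le_trans (wsum_step n hn hstep i) ih

theorem wsum_two (n : ℕ) [NeZero n] {q : Fin n × Fin 2 → ℕ} {i : Fin n}
    (h2 : 2 ≤ q (i, 0) + q (i, 1)) : 2 ≤ wsum n q i := by
  have hne : ((i, 0) : Fin n × Fin 2) ≠ (i, 1) := by
    simp [Prod.ext_iff]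
  have hsub : ({(i, 0), (i, 1)} : Finset (Fin n × Fin 2)) ⊆ Finset.univ := Finset.subset_univ _
  have hnn : ∀ x ∈ Finset.univ, x ∉ ({(i, 0), (i, 1)} : Finset (Fin n × Fin 2)) →
      0 ≤ (q x : ℚ) * cwt n i x.1 := by
    intro x _ _
    have := cwt_nonneg n i x.1
    positivity
  have hle := Finset.sum_le_sum_of_subset_of_nonneg hsub hnn
  rw [Finset.sum_pair hne] at hle
  have e0 : cwt n i ((i, (0:Fin 2))).1 = 1 := cwt_self n i
  rw [e0] at hle
  unfold wsum
  have : (2:ℚ) ≤ (q (i,0) : ℚ) + (q (i,1) : ℚ) := by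
    exact_mod_cast h2
  linarith
theorem gsum_bound (n : ℕ) (hn : 5 ≤ n) :
    ∑ i ∈ Finset.range n, (2⁻¹:ℚ) ^ gdist n i ≤ 3 - 2 * (2⁻¹:ℚ) ^ (n / 2) := by
  set m := n / 2 with hm
  have hmn : m + 1 ≤ n := by omega
  have hsplit := Finset.sum_Ico_consecutive (fun i => (2⁻¹:ℚ) ^ gdist n i)
    (Nat.zero_le (m+1)) hmn
  rw [Finset.range_eq_Ico, ← hsplit]
  have hgeom : ∀ K : ℕ, ∑ i ∈ Finset.range K, (2⁻¹:ℚ) ^ i = 2 - 2 * (2⁻¹:ℚ) ^ K := by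
    intro K
    rw [geom_sum_eq (by norm_num)]
    field_simp
    ring
  have h1 : ∑ i ∈ Finset.Ico 0 (m+1), (2⁻¹:ℚ) ^ gdist n i = 2 - (2⁻¹:ℚ) ^ m := by
    rw [← Finset.range_eq_Ico]
    have : ∀ i ∈ Finset.range (m+1), (2⁻¹:ℚ) ^ gdist n i = (2⁻¹:ℚ) ^ i := by
      intro i hi
      rw [Finset.mem_range] at hi
      congr 1
      unfold gdist
      omega
    rw [Finset.sum_congr rfl this, hgeom]
    rw [pow_succ]
    ring
  have h2 : ∑ i ∈ Finset.Ico (m+1) n, (2⁻¹:ℚ) ^ gdist n i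
      = ∑ t ∈ Finset.Ico 1 (n - m), (2⁻¹:ℚ) ^ t := by
    apply Finset.sum_nbij' (fun i => n - i) (fun t => n - t)
    · intro a ha
      rw [Finset.mem_Ico] at ha ⊢
      omega
    · intro a ha
      rw [Finset.mem_Ico] at ha ⊢
      omega
    · intro a ha
      rw [Finset.mem_Ico] at ha
      omega
    · intro a ha
      rw [Finset.mem_Ico] at ha
      omega
    · intro a ha
      rw [Finset.mem_Ico] at ha
      congr 1
      unfold gdist
      omega
  have h3 : ∑ t ∈ Finset.Ico 1 (n - m), (2⁻¹:ℚ) ^ t = 1 - 2 * (2⁻¹:ℚ) ^ (n - m) := by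
    have e1 : (1:ℕ) ≤ n - m := by omega
    have h0 := Finset.sum_Ico_consecutive (fun t => (2⁻¹:ℚ) ^ t) (Nat.zero_le 1) e1
    have e2 : ∑ t ∈ Finset.range 1, (2⁻¹:ℚ) ^ t = 1 := by simp
    have e3 := hgeom (n - m)
    rw [Finset.range_eq_Ico] at e2 e3
    linarith [h0, e2, e3]
  rw [h1, h2, h3]
  have h4 : (2⁻¹:ℚ) ^ (m+1) ≤ (2⁻¹:ℚ) ^ (n - m) := halfpow_mono (by omega)
  have h5 : (2⁻¹:ℚ) ^ m = 2 * (2⁻¹:ℚ) ^ (m + 1) := by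
    rw [pow_succ]; ring
  linarith

theorem cwt_sum_fin (n : ℕ) (hn : 5 ≤ n) [NeZero n] :
    ∑ k : Fin n, (2⁻¹:ℚ) ^ gdist n k.val ≤ 3 - 2 * (2⁻¹:ℚ) ^ (n / 2) := by
  rw [show (∑ k : Fin n, (2⁻¹:ℚ) ^ gdist n k.val)
      = ∑ i ∈ Finset.range n, (2⁻¹:ℚ) ^ gdist n i from
    Fin.sum_univ_eq_sum_range (fun i => (2⁻¹:ℚ) ^ gdist n i) n]
  exact gsum_bound n hn

theorem cwt_first_sum (n : ℕ) (hn : 5 ≤ n) [NeZero n] (j : Fin n) :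
    ∑ u : Fin n, cwt n u j ≤ 3 - 2 * (2⁻¹:ℚ) ^ (n / 2) := by
  have he : ∑ u : Fin n, cwt n u j = ∑ k : Fin n, (2⁻¹:ℚ) ^ gdist n k.val :=
    Fintype.sum_equiv (Equiv.subRight j) _ _ (fun u => rfl)
  rw [he]
  exact cwt_sum_fin n hn

theorem cwt_second_sum (n : ℕ) (hn : 5 ≤ n) [NeZero n] (u : Fin n) :
    ∑ j : Fin n, cwt n u j ≤ 3 - 2 * (2⁻¹:ℚ) ^ (n / 2) := by
  have he : ∑ j : Fin n, cwt n u j = ∑ k : Fin n, (2⁻¹:ℚ) ^ gdist n k.val :=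
    Fintype.sum_equiv (Equiv.subLeft u) _ _ (fun j => rfl)
  rw [he]
  exact cwt_sum_fin n hn

theorem gdist_lip_add' (n : ℕ) (hn : 5 ≤ n) [NeZero n] (k : Fin n) :
    gdist n ((k + 1).val) ≤ gdist n k.val + 1 := by
  have hk := k.isLt
  rw [valAdd1 n hn]
  unfold gdist
  split <;> omega

theorem gdist_lip_sub' (n : ℕ) (hn : 5 ≤ n) [NeZero n] (k : Fin n) :
    gdist n ((k - 1).val) ≤ gdist n k.val + 1 := by
  have hk := k.isLt
  rw [valSub1 n hn]
  unfold gdist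
  split <;> omega

theorem halfpow_ge {a b : ℕ} (h : a + 1 ≤ b) : 2 * (2⁻¹:ℚ) ^ b ≤ (2⁻¹:ℚ) ^ a := by
  have h1 := halfpow_mono h
  have h2 : (2⁻¹:ℚ) ^ (a+1) = 2⁻¹ * (2⁻¹:ℚ) ^ a := by rw [pow_succ]; ring
  rw [h2] at h1
  linarith

theorem halfpow_half {a b : ℕ} (h : b ≤ a + 1) : 2⁻¹ * (2⁻¹:ℚ) ^ a ≤ (2⁻¹:ℚ) ^ b := by
  have h1 := halfpow_mono h
  have h2 : (2⁻¹:ℚ) ^ (a+1) = 2⁻¹ * (2⁻¹:ℚ) ^ a := by rw [pow_succ]; ring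
  rw [h2] at h1
  linarith

/-- The key local inequality: if column `u` is empty, the weights toward `u-1` and `u+1`
dominate `5/2` times the weight toward `u`. -/
theorem empty_col_ineq (n : ℕ) (hn : 5 ≤ n) [NeZero n] (Q : Fin n → ℕ) {u : Fin n}
    (hQu : Q u = 0) :
    (5/2 : ℚ) * (∑ j, (Q j : ℚ) * cwt n u j)
      ≤ (∑ j, (Q j : ℚ) * cwt n (u - 1) j) + ∑ j, (Q j : ℚ) * cwt n (u + 1) j := by
  rw [← Finset.sum_add_distrib, Finset.mul_sum]
  apply Finset.sum_le_sum
  intro j _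
  by_cases hj : j = u
  · subst hj
    rw [hQu]
    norm_num
  · have hk0 : (u - j).val ≠ 0 := by
      intro h0
      exact (sub_ne_zero.mpr (Ne.symm hj)) (Fin.ext (h0.trans (Fin.val_zero n).symm))
    have hm1 : (u - 1) - j = (u - j) - 1 := by abel
    have hp1 : (u + 1) - j = (u - j) + 1 := by abel
    have hQj : (0:ℚ) ≤ (Q j : ℚ) := Nat.cast_nonneg _
    unfold cwt
    rw [hm1, hp1]
    set k := u - j with hk
    set g := gdist n k.val with hg
    have hcomb : (5/2 : ℚ) * (2⁻¹:ℚ) ^ g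
        ≤ (2⁻¹:ℚ) ^ gdist n ((k - 1).val) + (2⁻¹:ℚ) ^ gdist n ((k + 1).val) := by
      rcases gdist_dec n hn k hk0 with hdec | hdec
      · have hbig := halfpow_ge hdec
        have hsmall := halfpow_half (gdist_lip_add' n hn k)
        linarith
      · have hbig := halfpow_ge hdec
        have hsmall := halfpow_half (gdist_lip_sub' n hn k)
        linarith
    calc (5/2 : ℚ) * ((Q j : ℚ) * (2⁻¹:ℚ) ^ g) = (Q j : ℚ) * ((5/2 : ℚ) * (2⁻¹:ℚ) ^ g) := by ring
      _ ≤ (Q j : ℚ) * ((2⁻¹:ℚ) ^ gdist n ((k - 1).val) + (2⁻¹:ℚ) ^ gdist n ((k + 1).val)) :=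
          mul_le_mul_of_nonneg_left hcomb hQj
      _ = _ := by ring

theorem numeric_contra (n S : ℕ) (hn : 5 ≤ n)
    (final : (n:ℚ) + 12 * (2⁻¹:ℚ)^(n/2) * (S:ℚ) ≤ 11)
    (hQn : 2*(n:ℚ) ≤ 3*(S:ℚ)) : False := by
  have hn10 : n ≤ 10 := by
    by_contra hc
    push_neg at hc
    have h11 : (11:ℚ) ≤ (n:ℚ) := by exact_mod_cast hc
    have hpow : (0:ℚ) < (2⁻¹:ℚ)^(n/2) := by positivity
    have hS0 : (0:ℚ) ≤ (S:ℚ) := Nat.cast_nonneg _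
    nlinarith
  interval_cases n <;> (norm_num at final hQn ⊢; linarith)

theorem main_count (n : ℕ) (hn : 5 ≤ n) [NeZero n] (Q : Fin n → ℕ)
    (hA : ∀ i : Fin n, 2 ≤ ∑ j, (Q j : ℚ) * cwt n i j)
    (hS3 : 3 * (∑ j, Q j) ≤ 2 * n + 2) : False := by
  classical
  set S := ∑ j, Q j with hSdef
  set ε : ℚ := (2⁻¹:ℚ) ^ (n / 2) with hε
  have hεpos : 0 < ε := by positivity
  set Acol : Fin n → ℚ := fun i => ∑ j, (Q j : ℚ) * cwt n i j with hAcol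
  -- sum of all Acol
  have hAsum : ∑ i : Fin n, Acol i ≤ (3 - 2*ε) * S := by
    show (∑ i : Fin n, ∑ j : Fin n, (Q j : ℚ) * cwt n i j) ≤ _
    rw [Finset.sum_comm]
    have : ∀ j ∈ Finset.univ, ∑ i : Fin n, (Q j : ℚ) * cwt n i j ≤ (Q j : ℚ) * (3 - 2*ε) := by
      intro j _
      rw [← Finset.mul_sum]
      exact mul_le_mul_of_nonneg_left (cwt_first_sum n hn j) (Nat.cast_nonneg _)
    calc ∑ j : Fin n, ∑ i : Fin n, (Q j : ℚ) * cwt n i j ≤ ∑ j : Fin n, (Q j : ℚ) * (3 - 2*ε) :=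
          Finset.sum_le_sum this
      _ = (3 - 2*ε) * S := by rw [← Finset.sum_mul, hSdef]; push_cast; ring
  have hAsum_lb : 2 * (n:ℚ) ≤ ∑ i : Fin n, Acol i := by
    calc (2 * n : ℚ) = ∑ _i : Fin n, (2:ℚ) := by
          rw [Finset.sum_const, Finset.card_univ, Fintype.card_fin]; ring
      _ ≤ ∑ i : Fin n, Acol i := Finset.sum_le_sum (fun i _ => hA i)
  have hS1 : 2 * n ≤ 3 * S := by
    have h1 : (2 * n : ℚ) ≤ 3 * (S:ℚ) := by
      have h2 : ((3:ℚ) - 2*ε) * S ≤ 3 * S := by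
        have : (0:ℚ) ≤ (S:ℚ) := Nat.cast_nonneg _
        nlinarith
      linarith
    exact_mod_cast h1
  by_cases hall : ∀ j, Q j ≤ 1
  · by_cases hfull : ∀ j, 1 ≤ Q j
    · have hge : n ≤ S := by
        calc n = ∑ _j : Fin n, 1 := by
              rw [Finset.sum_const, Finset.card_univ, Fintype.card_fin]; ring
          _ ≤ S := Finset.sum_le_sum (fun j _ => hfull j)
      omega
    · push_neg at hfull
      obtain ⟨u, hu⟩ := hfull
      have hQu : Q u = 0 := by omega
      have hub : Acol u ≤ 2 - 2*ε := by
        have h1 : Acol u = ∑ j ∈ Finset.univ.erase u, (Q j : ℚ) * cwt n u j := by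
          show (∑ j : Fin n, (Q j : ℚ) * cwt n u j) = _
          rw [← Finset.add_sum_erase _ _ (Finset.mem_univ u), hQu]
          push_cast
          ring
        have h2 : ∑ j ∈ Finset.univ.erase u, (Q j : ℚ) * cwt n u j
            ≤ ∑ j ∈ Finset.univ.erase u, cwt n u j := by
          apply Finset.sum_le_sum
          intro j hj
          have hle1 : (Q j : ℚ) ≤ 1 := by exact_mod_cast hall j
          have := cwt_nonneg n u j
          nlinarith
        have h3 : ∑ j ∈ Finset.univ.erase u, cwt n u j
            = (∑ j : Fin n, cwt n u j) - cwt n u u := by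
          rw [← Finset.add_sum_erase _ _ (Finset.mem_univ u)]
          ring
        have h4 := cwt_second_sum n hn u
        rw [cwt_self] at h3
        rw [h1]
        linarith
      have hx : (2:ℚ) ≤ Acol u := hA u
      linarith
  · push_neg at hall
    obtain ⟨j0, hj0⟩ := hall
    have hj0' : 2 ≤ Q j0 := hj0
    set NE : Finset (Fin n) := Finset.univ.filter (fun j => ¬ Q j = 0) with hNE
    set E : Finset (Fin n) := Finset.univ.filter (fun j => Q j = 0) with hE
    have hcards : E.card + NE.card = n := by
      rw [hE, hNE]
      rw [Finset.card_filter_add_card_filter_not]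
      rw [Finset.card_univ, Fintype.card_fin]
    have hNEcard : NE.card + 1 ≤ S := by
      have hj0NE : j0 ∈ NE := by
        rw [hNE, Finset.mem_filter]
        exact ⟨Finset.mem_univ _, by omega⟩
      have h1 : ∑ j ∈ NE, Q j ≤ S := Finset.sum_le_sum_of_subset (Finset.subset_univ _)
      have h2 : ∑ j ∈ NE, Q j = Q j0 + ∑ j ∈ NE.erase j0, Q j :=
        (Finset.add_sum_erase _ _ hj0NE).symm
      have h3 : (NE.erase j0).card ≤ ∑ j ∈ NE.erase j0, Q j := by
        calc (NE.erase j0).card = ∑ _j ∈ NE.erase j0, 1 := by rw [Finset.sum_const]; ring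
          _ ≤ ∑ j ∈ NE.erase j0, Q j := by
              apply Finset.sum_le_sum
              intro j hj
              have := Finset.mem_of_mem_erase hj
              rw [hNE, Finset.mem_filter] at this
              omega
      have h4 : (NE.erase j0).card = NE.card - 1 := Finset.card_erase_of_mem hj0NE
      have h5 : 1 ≤ NE.card := Finset.card_pos.mpr ⟨j0, hj0NE⟩
      omega
    set s : Fin n → ℚ := fun i => Acol i - 2 with hs
    have hs0 : ∀ i, 0 ≤ s i := fun i => by
      have hx : (2:ℚ) ≤ Acol i := hA i
      show (0:ℚ) ≤ Acol i - 2
      linarith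
    have hEmpty : ∀ u ∈ E, 1 ≤ s (u - 1) + s (u + 1) := by
      intro u hu
      rw [hE, Finset.mem_filter] at hu
      have hkey : (5/2 : ℚ) * Acol u ≤ Acol (u-1) + Acol (u+1) := empty_col_ineq n hn Q hu.2
      have h2 : (2:ℚ) ≤ Acol u := hA u
      show (1:ℚ) ≤ (Acol (u-1) - 2) + (Acol (u+1) - 2)
      nlinarith
    have hEsum1 : (E.card : ℚ) ≤ ∑ u ∈ E, (s (u - 1) + s (u + 1)) := by
      calc (E.card : ℚ) = ∑ _u ∈ E, (1:ℚ) := by rw [Finset.sum_const]; ring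
        _ ≤ _ := Finset.sum_le_sum hEmpty
    have hEsum2 : ∑ u ∈ E, (s (u - 1) + s (u + 1)) ≤ 2 * ∑ i : Fin n, s i := by
      have ha : ∑ u ∈ E, s (u - 1) ≤ ∑ u : Fin n, s (u - 1) :=
        Finset.sum_le_sum_of_subset_of_nonneg (Finset.subset_univ _) (fun u _ _ => hs0 _)
      have hb : ∑ u ∈ E, s (u + 1) ≤ ∑ u : Fin n, s (u + 1) :=
        Finset.sum_le_sum_of_subset_of_nonneg (Finset.subset_univ _) (fun u _ _ => hs0 _)
      have ha' : ∑ u : Fin n, s (u - 1) = ∑ i : Fin n, s i :=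
        Fintype.sum_equiv (Equiv.subRight 1) _ _ (fun u => rfl)
      have hb' : ∑ u : Fin n, s (u + 1) = ∑ i : Fin n, s i :=
        Fintype.sum_equiv (Equiv.addRight 1) _ _ (fun u => rfl)
      rw [Finset.sum_add_distrib]
      linarith
    have hssum : ∑ i : Fin n, s i = (∑ i : Fin n, Acol i) - 2 * n := by
      rw [hs]
      rw [Finset.sum_sub_distrib]
      rw [Finset.sum_const, Finset.card_univ, Fintype.card_fin]
      push_cast
      ring
    -- assemble
    have hEcard : (E.card : ℚ) ≥ (n:ℚ) - S + 1 := by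
      have h1 : NE.card ≤ S - 1 := by omega
      have h2 : E.card = n - NE.card := by omega
      have h3 : NE.card ≤ n := by omega
      have hS1' : 1 ≤ S := by omega
      have h1' : (NE.card : ℚ) ≤ (S:ℚ) - 1 := by
        have hx : (NE.card : ℚ) ≤ ((S - 1 : ℕ) : ℚ) := Nat.cast_le.mpr h1
        rwa [Nat.cast_sub hS1', Nat.cast_one] at hx
      have h2' : (E.card : ℚ) = (n:ℚ) - NE.card := by
        rw [h2, Nat.cast_sub h3]
      linarith
    have final : (n:ℚ) + 12 * ε * S ≤ 11 := by
      have c1 : (n:ℚ) - S + 1 ≤ 2 * ((3 - 2*ε) * S - 2*n) := by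
        calc (n:ℚ) - S + 1 ≤ (E.card : ℚ) := hEcard
          _ ≤ ∑ u ∈ E, (s (u - 1) + s (u + 1)) := hEsum1
          _ ≤ 2 * ∑ i : Fin n, s i := hEsum2
          _ = 2 * ((∑ i : Fin n, Acol i) - 2*n) := by rw [hssum]
          _ ≤ 2 * ((3 - 2*ε) * S - 2*n) := by linarith [hAsum]
      have c2 : 21 * (S:ℚ) ≤ 14 * n + 14 := by
        have : (3 * S : ℚ) ≤ 2 * n + 2 := by exact_mod_cast hS3
        linarith
      nlinarith [c1, c2]
    rw [hε] at final
    exact numeric_contra n S hn final (by exact_mod_cast hS1)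

/-! ### Part III: the construction -/

section Helpers

variable {V : Type*} [DecidableEq V] {G : SimpleGraph V}

def rubCfg (p : V → ℕ) (v w u : V) : V → ℕ :=
  fun x => if x = v then p x - 1 else if x = w then p x - 1 else if x = u then p x + 1 else p x

theorem step_rub {p : V → ℕ} {v w u : V} (hvw : v ≠ w) (h1 : G.Adj v u) (h2 : G.Adj w u)
    (hp1 : 1 ≤ p v) (hp2 : 1 ≤ p w) : RubblingStep G p (rubCfg p v w u) :=
  Or.inr ⟨v, w, u, hvw, h1, h2, hp1, hp2, rfl⟩

theorem rubCfg_other {p : V → ℕ} {v w u x : V} (hxv : x ≠ v) (hxw : x ≠ w) (hxu : x ≠ u) :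
    rubCfg p v w u x = p x := by
  unfold rubCfg
  rw [if_neg hxv, if_neg hxw, if_neg hxu]

theorem rubCfg_target {p : V → ℕ} {v w u : V} (huv : u ≠ v) (huw : u ≠ w) :
    rubCfg p v w u u = p u + 1 := by
  unfold rubCfg
  rw [if_neg huv, if_neg huw, if_pos rfl]

theorem kreach_self {p : V → ℕ} {u : V} (h : 1 ≤ p u) : KReachable G p u 1 :=
  ⟨p, Relation.ReflTransGen.refl, h⟩

theorem kreach_rub {p : V → ℕ} {v w u : V} (hvw : v ≠ w) (h1 : G.Adj v u) (h2 : G.Adj w u)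
    (hp1 : 1 ≤ p v) (hp2 : 1 ≤ p w) : KReachable G p u 1 :=
  ⟨rubCfg p v w u, Relation.ReflTransGen.single (step_rub hvw h1 h2 hp1 hp2), by
    rw [rubCfg_target h1.ne' h2.ne']; omega⟩

theorem kreach_of_step {p q : V → ℕ} {u : V} (hstep : RubblingStep G p q)
    (h : KReachable G q u 1) : KReachable G p u 1 := by
  obtain ⟨q', hr, hq⟩ := h
  exact ⟨q', Relation.ReflTransGen.head hstep hr, hq⟩

end Helpers

theorem val1 (n : ℕ) (hn : 5 ≤ n) [NeZero n] : (1 : Fin n).val = 1 := by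
  rw [Fin.val_one']
  exact Nat.mod_eq_of_lt (by omega)

theorem adj_add (n : ℕ) (hn : 5 ≤ n) [NeZero n] (x : Fin n) (r : Fin 2) :
    (prism n).Adj (x, r) (x + 1, r) := by
  refine Or.inl ⟨cycleGraph_adj'.mpr (Or.inr ?_), rfl⟩
  rw [add_sub_cancel_left]
  exact val1 n hn

theorem adj_row01 (n : ℕ) [NeZero n] (x : Fin n) : (prism n).Adj (x, 0) (x, 1) :=
  Or.inr ⟨pathGraph_adj.mpr (Or.inl rfl), rfl⟩

theorem pne_col {n : ℕ} [NeZero n] {x y : Fin n} {r s : Fin 2} (h : x.val ≠ y.val) :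
    (x, r) ≠ (y, s) := fun he => h (congrArg (fun z => z.1.val) he)

theorem pne_row {n : ℕ} [NeZero n] {x y : Fin n} {r s : Fin 2} (h : r ≠ s) :
    (x, r) ≠ (y, s) := fun he => h (congrArg Prod.snd he)

theorem fin2_01 : (0 : Fin 2) ≠ 1 := by decide
theorem fin2_10 : (1 : Fin 2) ≠ 0 := by decide

def patd (n : ℕ) : Fin n × Fin 2 → ℕ := fun v =>
  if v.1.val % 3 = 0 ∧ v.2 = 0 ∨ v.1.val % 3 = 1 ∧ v.2 = 1 then 1 else 0

theorem patd_pos0 {n : ℕ} {x : Fin n} (h : x.val % 3 = 0) : 1 ≤ patd n (x, 0) := by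
  unfold patd
  rw [if_pos (Or.inl ⟨h, rfl⟩)]

theorem patd_pos1 {n : ℕ} {x : Fin n} (h : x.val % 3 = 1) : 1 ≤ patd n (x, 1) := by
  unfold patd
  rw [if_pos (Or.inr ⟨h, rfl⟩)]

theorem adj_sub (n : ℕ) (hn : 5 ≤ n) [NeZero n] (x : Fin n) (r : Fin 2) :
    (prism n).Adj (x - 1, r) (x, r) := by
  have h := adj_add n hn (x - 1) r
  rwa [sub_add_cancel] at h

theorem fin2_cases : ∀ r : Fin 2, r = 0 ∨ r = 1 := by decide

theorem patd_solvable (n : ℕ) (hn : 5 ≤ n) [NeZero n] : Solvable (prism n) (patd n) := by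
  intro u
  obtain ⟨j, r⟩ := u
  have hjlt : j.val < n := j.isLt
  have h3 : j.val % 3 = 0 ∨ j.val % 3 = 1 ∨ j.val % 3 = 2 := by omega
  rcases fin2_cases r with rfl | rfl
  · -- row 0
    rcases h3 with h3 | h3 | h3
    · exact kreach_self (patd_pos0 h3)
    · -- j ≡ 1: rubble from (j-1,0) and (j,1)
      have hm1 : (j-1).val = if j.val = 0 then n - 1 else j.val - 1 := valSub1 n hn j
      rw [if_neg (by omega)] at hm1
      exact kreach_rub (pne_row fin2_01) (adj_sub n hn j 0) ((adj_row01 n j).symm)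
        (patd_pos0 (by omega)) (patd_pos1 h3)
    · -- j ≡ 2: two rubbles
      have hm1 : (j-1).val = if j.val = 0 then n - 1 else j.val - 1 := valSub1 n hn j
      rw [if_neg (by omega)] at hm1
      have hm2 : ((j-1)-1).val = if (j-1).val = 0 then n - 1 else (j-1).val - 1 :=
        valSub1 n hn (j-1)
      rw [hm1] at hm2
      rw [if_neg (by omega)] at hm2
      have hv1 : (j+1).val = if j.val + 1 = n then 0 else j.val + 1 := valAdd1 n hn j
      have hN : (j+1).val % 3 = 0 ∧ (j+1).val ≠ j.val - 1 ∧ (j+1).val ≠ j.val - 2 := by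
        split_ifs at hv1 <;> omega
      refine kreach_of_step (step_rub (pne_row fin2_01) (adj_sub n hn (j-1) 0)
        ((adj_row01 n (j-1)).symm) (patd_pos0 (by omega)) (patd_pos1 (by omega))) ?_
      refine kreach_rub (pne_col (by omega : (j-1).val ≠ (j+1).val))
        (adj_sub n hn j 0) ((adj_add n hn j 0).symm) ?_ ?_
      · rw [rubCfg_target (pne_col (by omega)) (pne_row fin2_01)]
        omega
      · rw [rubCfg_other (pne_col (by omega)) (pne_row fin2_01) (pne_col (by omega))]
        exact patd_pos0 hN.1
  · -- row 1
    rcases h3 with h3 | h3 | h3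
    · -- j ≡ 0
      rcases eq_or_ne (j.val + 1) n with hw | hw
      · -- seam: j = n-1
        have hv1 : (j+1).val = 0 := by rw [valAdd1 n hn j, if_pos hw]
        have hv2 : ((j+1)+1).val = 1 := by
          rw [valAdd1 n hn (j+1), hv1, if_neg (by omega)]
        refine kreach_of_step (step_rub (pne_row fin2_01) (adj_row01 n (j+1))
          ((adj_add n hn (j+1) 1).symm) (patd_pos0 (by omega)) (patd_pos1 (by omega))) ?_
        refine kreach_rub (pne_row fin2_01) (adj_row01 n j) ((adj_add n hn j 1).symm) ?_ ?_
        · rw [rubCfg_other (pne_col (by omega)) (pne_row fin2_01) (pne_row fin2_01)]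
          exact patd_pos0 h3
        · rw [rubCfg_target (pne_row fin2_10) (pne_col (by omega))]
          omega
      · -- generic
        have hv1 : (j+1).val = j.val + 1 := by rw [valAdd1 n hn j, if_neg hw]
        exact kreach_rub (pne_row fin2_01) (adj_row01 n j) ((adj_add n hn j 1).symm)
          (patd_pos0 h3) (patd_pos1 (by omega))
    · exact kreach_self (patd_pos1 h3)
    · -- j ≡ 2
      rcases eq_or_ne (j.val + 2) n with hw2 | hw2
      · -- seam2: j = n-2
        have hv1 : (j+1).val = j.val + 1 := by rw [valAdd1 n hn j, if_neg (by omega)]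
        have hv2 : ((j+1)+1).val = 0 := by rw [valAdd1 n hn (j+1), if_pos (by omega)]
        have hv3 : (((j+1)+1)+1).val = 1 := by
          rw [valAdd1 n hn ((j+1)+1), hv2, if_neg (by omega)]
        have hm1 : (j-1).val = if j.val = 0 then n - 1 else j.val - 1 := valSub1 n hn j
        rw [if_neg (by omega)] at hm1
        refine kreach_of_step (step_rub (pne_row fin2_01) (adj_row01 n ((j+1)+1))
          ((adj_add n hn ((j+1)+1) 1).symm) (patd_pos0 (by omega)) (patd_pos1 (by omega))) ?_
        refine kreach_of_step (step_rub (G := prism n) (pne_row fin2_01) (adj_row01 n (j+1))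
          ((adj_add n hn (j+1) 1).symm) ?_ ?_) ?_
        · rw [rubCfg_other (pne_col (by omega)) (pne_row fin2_01) (pne_row fin2_01)]
          exact patd_pos0 (by omega)
        · rw [rubCfg_target (pne_row fin2_10) (pne_col (by omega))]
          omega
        refine kreach_rub (pne_col (by omega : (j-1).val ≠ (j+1).val))
          (adj_sub n hn j 1) ((adj_add n hn j 1).symm) ?_ ?_
        · rw [rubCfg_other (pne_row fin2_10) (pne_col (by omega)) (pne_col (by omega))]
          rw [rubCfg_other (pne_col (by omega)) (pne_col (by omega)) (pne_col (by omega))]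
          exact patd_pos1 (by omega)
        · rw [rubCfg_target (pne_row fin2_10) (pne_col (by omega))]
          omega
      · -- generic j ≡ 2 (row 1)
        have hm1 : (j-1).val = if j.val = 0 then n - 1 else j.val - 1 := valSub1 n hn j
        rw [if_neg (by omega)] at hm1
        have hv1 : (j+1).val = if j.val + 1 = n then 0 else j.val + 1 := valAdd1 n hn j
        have hv2 : ((j+1)+1).val = if (j+1).val + 1 = n then 0 else (j+1).val + 1 :=
          valAdd1 n hn (j+1)
        have hN : (j+1).val % 3 = 0 ∧ ((j+1)+1).val % 3 = 1 ∧ (j-1).val ≠ (j+1).val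
            ∧ (j-1).val ≠ ((j+1)+1).val ∧ (j+1).val ≠ ((j+1)+1).val := by
          split_ifs at hv1 hv2 <;> omega
        refine kreach_of_step (step_rub (pne_row fin2_01) (adj_row01 n (j+1))
          ((adj_add n hn (j+1) 1).symm) (patd_pos0 hN.1) (patd_pos1 hN.2.1)) ?_
        refine kreach_rub (pne_col hN.2.2.1) (adj_sub n hn j 1) ((adj_add n hn j 1).symm) ?_ ?_
        · rw [rubCfg_other (pne_row fin2_10) (pne_col hN.2.2.2.1) (pne_col hN.2.2.1)]
          exact patd_pos1 (by omega)
        · rw [rubCfg_target (pne_row fin2_10) (pne_col hN.2.2.2.2)]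
          omega

theorem count3 (N : ℕ) :
    (∑ i ∈ Finset.range N, ((if i % 3 = 0 then 1 else 0) + (if i % 3 = 1 then 1 else 0)))
      = (N+2)/3 + (N+1)/3 := by
  induction N with
  | zero => simp
  | succ N ih =>
    rw [Finset.sum_range_succ, ih]
    split_ifs <;> omega

theorem patd_eval0 {n : ℕ} (j : Fin n) : patd n (j, 0) = if j.val % 3 = 0 then 1 else 0 := by
  unfold patd
  by_cases h : j.val % 3 = 0
  · rw [if_pos h, if_pos (Or.inl ⟨h, rfl⟩)]
  · rw [if_neg h, if_neg]
    rintro (⟨h1, _⟩ | ⟨_, h2⟩)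
    · exact h h1
    · exact fin2_01 h2

theorem patd_eval1 {n : ℕ} (j : Fin n) : patd n (j, 1) = if j.val % 3 = 1 then 1 else 0 := by
  unfold patd
  by_cases h : j.val % 3 = 1
  · rw [if_pos h, if_pos (Or.inr ⟨h, rfl⟩)]
  · rw [if_neg h, if_neg]
    rintro (⟨_, h2⟩ | ⟨h1, _⟩)
    · exact fin2_10 h2
    · exact h h1

theorem patd_sum (n : ℕ) [NeZero n] : ∑ v : Fin n × Fin 2, patd n v = (n+2)/3 + (n+1)/3 := by
  rw [Fintype.sum_prod_type]
  have h1 : ∀ j : Fin n, (∑ r : Fin 2, patd n (j, r))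
      = ((if j.val % 3 = 0 then 1 else 0) + (if j.val % 3 = 1 then 1 else 0)) := by
    intro j
    rw [Fin.sum_univ_two, patd_eval0, patd_eval1]
  rw [Finset.sum_congr rfl (fun j _ => h1 j)]
  rw [Fin.sum_univ_eq_sum_range (fun i => ((if i % 3 = 0 then 1 else 0) + (if i % 3 = 1 then 1 else 0))) n]
  exact count3 n

theorem wsum_cols (n : ℕ) [NeZero n] (p : Fin n × Fin 2 → ℕ) (i : Fin n) :
    wsum n p i = ∑ j : Fin n, ((p (j, 0) + p (j, 1) : ℕ) : ℚ) * cwt n i j := by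
  unfold wsum
  rw [Fintype.sum_prod_type]
  apply Finset.sum_congr rfl
  intro j _
  rw [Fin.sum_univ_two]
  push_cast
  ring

theorem sum_cols (n : ℕ) [NeZero n] (p : Fin n × Fin 2 → ℕ) :
    ∑ v : Fin n × Fin 2, p v = ∑ j : Fin n, (p (j, 0) + p (j, 1)) := by
  rw [Fintype.sum_prod_type]
  apply Finset.sum_congr rfl
  intro j _
  rw [Fin.sum_univ_two]

/-- Every optimal distribution on the `n`-prism (`n ≥ 5`) has a rung that is not
2-reachable. -/
theorem exists_rung_not_two_reachable (n : ℕ) (hn : 5 ≤ n) (p : Fin n × Fin 2 → ℕ)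
    (hsolv : Solvable (prism n) p) (hopt : ∑ v, p v = optRub (prism n)) :
    ∃ i : Fin n, ¬ ∃ q, RubblingReach (prism n) p q ∧ 2 ≤ q (i, 0) + q (i, 1) := by
  haveI : NeZero n := ⟨by omega⟩
  by_contra hcon
  push_neg at hcon
  have hA : ∀ i : Fin n, 2 ≤ ∑ j : Fin n, ((p (j, 0) + p (j, 1) : ℕ) : ℚ) * cwt n i j := by
    intro i
    obtain ⟨q, hr, h2⟩ := hcon i
    have hw2 := wsum_two n h2
    have hw3 := wsum_reach n hn hr i
    rw [← wsum_cols]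
    linarith
  have hU : optRub (prism n) ≤ (n+2)/3 + (n+1)/3 :=
    Nat.sInf_le ⟨patd n, patd_solvable n hn, patd_sum n⟩
  have hS3 : 3 * (∑ j : Fin n, (p (j, 0) + p (j, 1))) ≤ 2 * n + 2 := by
    rw [← sum_cols]
    rw [hopt]
    omega
  exact main_count n hn _ hA hS3
end

section
/- Let p be a pebble distribution on the ladder P_n□P_2, and let l and r be vertices lying in columns i_l and i_r respectively with i_l < i_r. Suppose that for some k_l ≥ 1 and k_r ≥ 1 the vertex l is right k_l-reachable and the vertex r is left k_r-reachable, but l and r are not independently reachable (there is no executable rubbling sequence after which both l and r carry at least one pebble). Then every vertex lying in a column strictly between i_l and i_r is reachable from p. -/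
open SimpleGraph

/-- The ladder `P_n □ P_2`. -/
def ladder (n : ℕ) : SimpleGraph (Fin n × Fin 2) :=
  pathGraph n □ pathGraph 2

/-- A rubbling move all of whose vertices lie in the set `S`. -/
def RubblingStepOn {V : Type*} [DecidableEq V] (G : SimpleGraph V) (S : Set V)
    (p q : V → ℕ) : Prop :=
  (∃ v u, v ∈ S ∧ u ∈ S ∧ G.Adj v u ∧ 2 ≤ p v ∧
      q = fun x => if x = v then p x - 2 else if x = u then p x + 1 else p x) ∨
  (∃ v w u, v ∈ S ∧ w ∈ S ∧ u ∈ S ∧ v ≠ w ∧ G.Adj v u ∧ G.Adj w u ∧ 1 ≤ p v ∧ 1 ≤ p w ∧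
      q = fun x => if x = v then p x - 1 else if x = w then p x - 1
          else if x = u then p x + 1 else p x)

/-- `q` is obtainable from `p` by an executable rubbling sequence all of whose
moves act only on vertices of `S`. -/
def RubblingReachOn {V : Type*} [DecidableEq V] (G : SimpleGraph V) (S : Set V) :
    (V → ℕ) → (V → ℕ) → Prop :=
  Relation.ReflTransGen (RubblingStepOn G S)

/-- `x` is left `k`-reachable: `k`-reachable from the restriction of `p` inside the
induced subgraph on the columns up to the column of `x`. -/
def LeftKReachable (n : ℕ) (p : Fin n × Fin 2 → ℕ) (x : Fin n × Fin 2) (k : ℕ) : Prop :=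
  ∃ q, RubblingReachOn (ladder n) {v | v.1 ≤ x.1}
      (fun v => if v.1 ≤ x.1 then p v else 0) q ∧ k ≤ q x

/-- `x` is right `k`-reachable: `k`-reachable from the restriction of `p` inside the
induced subgraph on the columns from the column of `x` onwards. -/
def RightKReachable (n : ℕ) (p : Fin n × Fin 2 → ℕ) (x : Fin n × Fin 2) (k : ℕ) : Prop :=
  ∃ q, RubblingReachOn (ladder n) {v | x.1 ≤ v.1}
      (fun v => if x.1 ≤ v.1 then p v else 0) q ∧ k ≤ q x

section Infra
variable {V : Type*} [DecidableEq V] {G : SimpleGraph V}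

lemma stepOn_step {S : Set V} {p q : V → ℕ} (h : RubblingStepOn G S p q) :
    RubblingStep G p q := by
  rcases h with ⟨v, u, _, _, h1, h2, h3⟩ | ⟨v, w, u, _, _, _, h1, h2, h3, h4, h5, h6⟩
  · exact Or.inl ⟨v, u, h1, h2, h3⟩
  · exact Or.inr ⟨v, w, u, h1, h2, h3, h4, h5, h6⟩

lemma step_add {p q : V → ℕ} (d : V → ℕ) (h : RubblingStep G p q) :
    RubblingStep G (fun x => p x + d x) (fun x => q x + d x) := by
  rcases h with ⟨v, u, h1, h2, h3⟩ | ⟨v, w, u, h0, h1, h2, h3, h4, h5⟩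
  · refine Or.inl ⟨v, u, h1, by dsimp only; omega, ?_⟩
    subst h3; funext x; dsimp only
    by_cases hx : x = v
    · subst hx; simp only [eq_self_iff_true, if_true]; omega
    · rw [if_neg hx, if_neg hx]
      by_cases hx2 : x = u
      · subst hx2; simp only [eq_self_iff_true, if_true, if_neg hx]; omega
      · rw [if_neg hx2, if_neg hx2]
  · refine Or.inr ⟨v, w, u, h0, h1, h2, by dsimp only; omega, by dsimp only; omega, ?_⟩
    subst h5; funext x; dsimp only
    by_cases hx : x = v
    · subst hx; simp only [eq_self_iff_true, if_true]; omega
    · rw [if_neg hx, if_neg hx]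
      by_cases hx2 : x = w
      · subst hx2; simp only [eq_self_iff_true, if_true, if_neg hx]; omega
      · rw [if_neg hx2, if_neg hx2]
        by_cases hx3 : x = u
        · subst hx3; simp only [eq_self_iff_true, if_true, if_neg hx, if_neg hx2]; omega
        · rw [if_neg hx3, if_neg hx3]

lemma reach_add {p q : V → ℕ} (d : V → ℕ) (h : RubblingReach G p q) :
    RubblingReach G (fun x => p x + d x) (fun x => q x + d x) := by
  induction h with
  | refl => exact Relation.ReflTransGen.refl
  | tail _ hstep ih => exact ih.tail (step_add d hstep)

lemma reachOn_lift {S : Set V} {p q : V → ℕ} (d : V → ℕ)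
    (h : RubblingReachOn G S p q) :
    RubblingReach G (fun x => p x + d x) (fun x => q x + d x) := by
  induction h with
  | refl => exact Relation.ReflTransGen.refl
  | tail _ hstep ih => exact ih.tail (step_add d (stepOn_step hstep))

lemma stepOn_outside {S : Set V} {p q : V → ℕ} (h : RubblingStepOn G S p q)
    {x : V} (hx : x ∉ S) : q x = p x := by
  rcases h with ⟨v, u, hv, hu, _, _, h3⟩ | ⟨v, w, u, hv, hw, hu, _, _, _, _, _, h3⟩
  · subst h3
    have : x ≠ v := fun h => hx (h ▸ hv)
    have : x ≠ u := fun h => hx (h ▸ hu)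
    simp [*]
  · subst h3
    have : x ≠ v := fun h => hx (h ▸ hv)
    have : x ≠ w := fun h => hx (h ▸ hw)
    have : x ≠ u := fun h => hx (h ▸ hu)
    simp [*]

lemma reachOn_outside {S : Set V} {p q : V → ℕ} (h : RubblingReachOn G S p q)
    {x : V} (hx : x ∉ S) : q x = p x := by
  induction h with
  | refl => rfl
  | tail _ hstep ih => rw [stepOn_outside hstep hx, ih]

/-- Combine two rubbling sequences acting on disjoint regions. -/
lemma combine {S T : Set V} (hST : Disjoint S T) {p p1 p2 q1 q2 : V → ℕ}
    (hp1in : ∀ x ∈ S, p1 x = p x) (hp1out : ∀ x ∉ S, p1 x = 0)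
    (hp2in : ∀ x ∈ T, p2 x = p x) (hp2out : ∀ x ∉ T, p2 x = 0)
    (h1 : RubblingReachOn G S p1 q1)
    (h2 : RubblingReachOn G T p2 q2) :
    ∃ q : V → ℕ, RubblingReach G p q ∧ (∀ x ∈ S, q x = q1 x) ∧ (∀ x ∈ T, q x = q2 x) := by
  classical
  set d1 : V → ℕ := fun x => p x - p1 x with hd1
  have hp1le : ∀ x, p1 x ≤ p x := by
    intro x; by_cases hx : x ∈ S
    · rw [hp1in x hx]
    · rw [hp1out x hx]; omega
  have e1 : (fun x => p1 x + d1 x) = p := by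
    funext x; simp only [hd1]; have := hp1le x; omega
  have r1 : RubblingReach G p (fun x => q1 x + d1 x) := by
    have := reachOn_lift d1 h1; rwa [e1] at this
  set t1 : V → ℕ := fun x => q1 x + d1 x with ht1
  have ht1T : ∀ x ∈ T, t1 x = p x := by
    intro x hx
    have hxS : x ∉ S := fun h => (hST.ne_of_mem h hx) rfl
    have h := reachOn_outside h1 hxS
    simp only [ht1, hd1, h, hp1out x hxS]; omega
  set d2 : V → ℕ := fun x => t1 x - p2 x with hd2
  have hp2le : ∀ x, p2 x ≤ t1 x := by
    intro x; by_cases hx : x ∈ T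
    · rw [hp2in x hx, ht1T x hx]
    · rw [hp2out x hx]; exact Nat.zero_le _
  have e2 : (fun x => p2 x + d2 x) = t1 := by
    funext x; simp only [hd2]; have := hp2le x; omega
  have r2 : RubblingReach G t1 (fun x => q2 x + d2 x) := by
    have := reachOn_lift d2 h2; rwa [e2] at this
  refine ⟨fun x => q2 x + d2 x, r1.trans r2, ?_, ?_⟩
  · intro x hx
    have hxT : x ∉ T := fun h => (hST.ne_of_mem hx h) rfl
    have hq2 := reachOn_outside h2 hxT
    have h5 : t1 x = q1 x := by simp only [ht1, hd1, hp1in x hx]; omega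
    simp only [hq2, hd2, hp2out x hxT, h5]; omega
  · intro x hx
    have : p2 x = t1 x := by rw [hp2in x hx, ht1T x hx]
    simp only [hd2, this]; omega

end Infra

section LadderAux
variable {n : ℕ}

lemma veq {a b : Fin n × Fin 2} : a = b ↔ (a.1.1 = b.1.1 ∧ a.2.1 = b.2.1) := by
  rw [Prod.ext_iff, Fin.ext_iff, Fin.ext_iff]

lemma vne {a b : Fin n × Fin 2} (h : a.1.1 ≠ b.1.1 ∨ a.2.1 ≠ b.2.1) : a ≠ b := by
  intro he
  rw [veq] at he
  rcases h with h | h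
  · exact h he.1
  · exact h he.2

lemma ladder_adj {a b : Fin n × Fin 2} :
    (ladder n).Adj a b ↔
      ((a.1 = b.1 ∧ a.2 ≠ b.2) ∨ ((a.1.1 + 1 = b.1.1 ∨ b.1.1 + 1 = a.1.1) ∧ a.2 = b.2)) := by
  show (pathGraph n □ pathGraph 2).Adj a b ↔ _
  rw [boxProd_adj]
  constructor
  · rintro (⟨h1, h2⟩ | ⟨h1, h2⟩)
    · right; rw [pathGraph_adj] at h1; exact ⟨h1, h2⟩
    · left
      refine ⟨h2, fun he => ?_⟩
      rw [pathGraph_adj] at h1; rw [he] at h1; omega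
  · rintro (⟨h1, h2⟩ | ⟨h1, h2⟩)
    · right
      refine ⟨?_, h1⟩
      rw [pathGraph_adj]
      have ha := a.2.isLt; have hb := b.2.isLt
      have : a.2.1 ≠ b.2.1 := fun h => h2 (Fin.ext h)
      omega
    · left; rw [pathGraph_adj]; exact ⟨h1, h2⟩

lemma wall_facts {P : Fin n × Fin 2 → ℕ} {m : ℕ} (hm : m < n) (hm1 : 1 ≤ m)
    (hm1n : m - 1 < n)
    {j jo : Fin 2} (hjo : j ≠ jo)
    (hv : ¬ KReachable (ladder n) P ((⟨m, hm⟩ : Fin n), j) 1)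
    {q : Fin n × Fin 2 → ℕ} (hq : RubblingReach (ladder n) P q) :
    q (⟨m, hm⟩, j) = 0 ∧ q (⟨m, hm⟩, jo) ≤ 1 ∧ q (⟨m-1, hm1n⟩, j) ≤ 1 ∧
      ¬(1 ≤ q (⟨m, hm⟩, jo) ∧ 1 ≤ q (⟨m-1, hm1n⟩, j)) := by
  set vtx : Fin n × Fin 2 := (⟨m, hm⟩, j) with hvtx
  set z : Fin n × Fin 2 := (⟨m, hm⟩, jo) with hz
  set mj : Fin n × Fin 2 := (⟨m-1, hm1n⟩, j) with hmj
  have hzv : (ladder n).Adj z vtx := by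
    rw [ladder_adj]; left; exact ⟨rfl, fun h => hjo (h.symm)⟩
  have hmv : (ladder n).Adj mj vtx := by
    rw [ladder_adj]; right; constructor
    · left; show m - 1 + 1 = m; omega
    · rfl
  have hvz : vtx ≠ z := vne (Or.inr (fun h => hjo (Fin.ext h)))
  have hvmj : vtx ≠ mj := vne (Or.inl (by show m ≠ m - 1; omega))
  have hzmj : z ≠ mj := vne (Or.inl (by show m ≠ m - 1; omega))
  have f1 : q vtx = 0 := by
    by_contra h
    exact hv ⟨q, hq, by omega⟩
  have f2 : q z ≤ 1 := by
    by_contra h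
    push_neg at h
    refine hv ⟨_, hq.tail (Or.inl ⟨z, vtx, hzv, h, rfl⟩), ?_⟩
    simp only [if_neg hvz, eq_self_iff_true, if_true]
    omega
  have f3 : q mj ≤ 1 := by
    by_contra h
    push_neg at h
    refine hv ⟨_, hq.tail (Or.inl ⟨mj, vtx, hmv, h, rfl⟩), ?_⟩
    simp only [if_neg hvmj, eq_self_iff_true, if_true]
    omega
  have f4 : ¬(1 ≤ q z ∧ 1 ≤ q mj) := by
    rintro ⟨h1, h2⟩
    refine hv ⟨_, hq.tail (Or.inr ⟨z, mj, vtx, hzmj, hzv, hmv, h1, h2, rfl⟩), ?_⟩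
    simp only [if_neg hvz, if_neg hvmj, eq_self_iff_true, if_true]
    omega
  exact ⟨f1, f2, f3, f4⟩

/-- column reversal -/
def rv (x : Fin n × Fin 2) : Fin n × Fin 2 := (x.1.rev, x.2)

lemma rv_rv (x : Fin n × Fin 2) : rv (rv x) = x := by
  simp [rv, Fin.rev_rev]

lemma rv_col (x : Fin n × Fin 2) : (rv x).1.1 = n - 1 - x.1.1 := by
  simp [rv, Fin.val_rev]; omega

lemma rv_eq_iff {x v : Fin n × Fin 2} : rv x = v ↔ x = rv v := by
  constructor
  · rintro rfl; rw [rv_rv]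
  · rintro rfl; rw [rv_rv]

lemma rv_adj {a b : Fin n × Fin 2} (h : (ladder n).Adj a b) :
    (ladder n).Adj (rv a) (rv b) := by
  rw [ladder_adj] at h ⊢
  have ha := a.1.isLt; have hb := b.1.isLt
  rcases h with ⟨h1, h2⟩ | ⟨h1, h2⟩
  · left
    refine ⟨?_, h2⟩
    show a.1.rev = b.1.rev
    rw [h1]
  · right
    refine ⟨?_, h2⟩
    rw [rv_col, rv_col]
    have : a.1.1 ≠ b.1.1 := by omega
    omega

lemma stepOn_rv {S : Set (Fin n × Fin 2)} {p q : Fin n × Fin 2 → ℕ}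
    (h : RubblingStepOn (ladder n) S p q) :
    RubblingStepOn (ladder n) (rv ⁻¹' S) (fun x => p (rv x)) (fun x => q (rv x)) := by
  rcases h with ⟨v, u, hvS, huS, h1, h2, h3⟩ | ⟨v, w, u, hvS, hwS, huS, h0, h1, h2, h3, h4, h5⟩
  · refine Or.inl ⟨rv v, rv u, by simp [Set.mem_preimage, rv_rv, hvS],
      by simp [Set.mem_preimage, rv_rv, huS], rv_adj h1, by dsimp only; rw [rv_rv]; exact h2, ?_⟩
    funext x
    rw [h3]
    dsimp only
    by_cases hx : x = rv v
    · rw [if_pos hx, if_pos (by rw [← rv_eq_iff] at hx; exact hx)]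
    · rw [if_neg hx, if_neg (by rw [rv_eq_iff]; exact hx)]
      by_cases hx2 : x = rv u
      · rw [if_pos hx2, if_pos (by rw [← rv_eq_iff] at hx2; exact hx2)]
      · rw [if_neg hx2, if_neg (by rw [rv_eq_iff]; exact hx2)]
  · refine Or.inr ⟨rv v, rv w, rv u, by simp [Set.mem_preimage, rv_rv, hvS],
      by simp [Set.mem_preimage, rv_rv, hwS], by simp [Set.mem_preimage, rv_rv, huS],
      fun he => h0 (by rw [← rv_rv v, ← rv_rv w, he]),
      rv_adj h1, rv_adj h2,
      by dsimp only; rw [rv_rv]; exact h3,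
      by dsimp only; rw [rv_rv]; exact h4, ?_⟩
    funext x
    rw [h5]
    dsimp only
    by_cases hx : x = rv v
    · rw [if_pos hx, if_pos (by rw [← rv_eq_iff] at hx; exact hx)]
    · rw [if_neg hx, if_neg (by rw [rv_eq_iff]; exact hx)]
      by_cases hx2 : x = rv w
      · rw [if_pos hx2, if_pos (by rw [← rv_eq_iff] at hx2; exact hx2)]
      · rw [if_neg hx2, if_neg (by rw [rv_eq_iff]; exact hx2)]
        by_cases hx3 : x = rv u
        · rw [if_pos hx3, if_pos (by rw [← rv_eq_iff] at hx3; exact hx3)]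
        · rw [if_neg hx3, if_neg (by rw [rv_eq_iff]; exact hx3)]

lemma reachOn_rv {S : Set (Fin n × Fin 2)} {p q : Fin n × Fin 2 → ℕ}
    (h : RubblingReachOn (ladder n) S p q) :
    RubblingReachOn (ladder n) (rv ⁻¹' S) (fun x => p (rv x)) (fun x => q (rv x)) := by
  induction h with
  | refl => exact Relation.ReflTransGen.refl
  | tail _ hstep ih => exact ih.tail (stepOn_rv hstep)

lemma step_rv {p q : Fin n × Fin 2 → ℕ} (h : RubblingStep (ladder n) p q) :
    RubblingStep (ladder n) (fun x => p (rv x)) (fun x => q (rv x)) := by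
  have h' : RubblingStepOn (ladder n) Set.univ p q := by
    rcases h with ⟨v, u, h1, h2, h3⟩ | ⟨v, w, u, h1, h2, h3, h4, h5, h6⟩
    · exact Or.inl ⟨v, u, trivial, trivial, h1, h2, h3⟩
    · exact Or.inr ⟨v, w, u, trivial, trivial, trivial, h1, h2, h3, h4, h5, h6⟩
  exact stepOn_step (stepOn_rv h')

lemma reach_rv {p q : Fin n × Fin 2 → ℕ} (h : RubblingReach (ladder n) p q) :
    RubblingReach (ladder n) (fun x => p (rv x)) (fun x => q (rv x)) := by
  induction h with
  | refl => exact Relation.ReflTransGen.refl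
  | tail _ hstep ih => exact ih.tail (step_rv hstep)

lemma kreach_rv {p : Fin n × Fin 2 → ℕ} {t : Fin n × Fin 2} {k : ℕ}
    (h : KReachable (ladder n) (fun x => p (rv x)) (rv t) k) : KReachable (ladder n) p t k := by
  obtain ⟨q, hq, hk⟩ := h
  refine ⟨fun x => q (rv x), ?_, by dsimp only; exact hk⟩
  have h2 := reach_rv hq
  simp only [rv_rv] at h2
  exact h2

end LadderAux

section Sim
variable {n : ℕ}

lemma sim (P : Fin n × Fin 2 → ℕ) (lo m : ℕ) (hlom : lo < m) (hm : m < n)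
    (hm1n : m - 1 < n) (hm2n : m - 2 < n)
    (j jo : Fin 2) (hjo : j.1 + jo.1 = 1)
    (hv : ¬ KReachable (ladder n) P ((⟨m, hm⟩ : Fin n), j) 1)
    {act : Fin n × Fin 2 → ℕ}
    (hact : RubblingReachOn (ladder n) {w | lo ≤ w.1.1}
      (fun w => if lo ≤ w.1.1 then P w else 0) act) :
    ∃ (S : Fin n × Fin 2 → ℕ) (a b2 b4 : ℕ),
      RubblingReachOn (ladder n) {w | lo ≤ w.1.1 ∧ w.1.1 < m}
        (fun w => if lo ≤ w.1.1 ∧ w.1.1 < m then P w else 0) S ∧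
      (1 ≤ a + b2 + b4 → lo + 2 ≤ m) ∧
      S (⟨m-1, hm1n⟩, jo) + a ≥ act (⟨m-1, hm1n⟩, jo) + b2 ∧
      S (⟨m-1, hm1n⟩, j) + b2 + b4 ≥ act (⟨m-1, hm1n⟩, j) ∧
      S (⟨m-2, hm2n⟩, jo) ≥ act (⟨m-2, hm2n⟩, jo) + (a + b2 + b4) ∧
      S (⟨m-2, hm2n⟩, j) ≥ act (⟨m-2, hm2n⟩, j) + b4 ∧
      ∀ x : Fin n × Fin 2, x.1.1 < m → x ≠ (⟨m-1, hm1n⟩, jo) → x ≠ (⟨m-1, hm1n⟩, j) →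
        x ≠ (⟨m-2, hm2n⟩, jo) → x ≠ (⟨m-2, hm2n⟩, j) → S x ≥ act x := by
  induction hact with
  | refl =>
    refine ⟨fun w => if lo ≤ w.1.1 ∧ w.1.1 < m then P w else 0, 0, 0, 0,
      Relation.ReflTransGen.refl, by omega, ?_, ?_, ?_, ?_, ?_⟩
    · have e1 : lo ≤ m - 1 ∧ m - 1 < m := by omega
      by_cases h : lo ≤ m - 1
      · simp only [if_pos (show lo ≤ ((⟨m-1, hm1n⟩ : Fin n), jo).1.1 ∧
          ((⟨m-1, hm1n⟩ : Fin n), jo).1.1 < m from ⟨h, by show m - 1 < m; omega⟩),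
          if_pos (show lo ≤ ((⟨m-1, hm1n⟩ : Fin n), jo).1.1 from h)]
        omega
      · omega
    · by_cases h : lo ≤ m - 1
      · simp only [if_pos (show lo ≤ ((⟨m-1, hm1n⟩ : Fin n), j).1.1 ∧
          ((⟨m-1, hm1n⟩ : Fin n), j).1.1 < m from ⟨h, by show m - 1 < m; omega⟩),
          if_pos (show lo ≤ ((⟨m-1, hm1n⟩ : Fin n), j).1.1 from h)]
        omega
      · omega
    · by_cases h : lo ≤ m - 2
      · simp only [if_pos (show lo ≤ ((⟨m-2, hm2n⟩ : Fin n), jo).1.1 ∧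
          ((⟨m-2, hm2n⟩ : Fin n), jo).1.1 < m from ⟨h, by show m - 2 < m; omega⟩),
          if_pos (show lo ≤ ((⟨m-2, hm2n⟩ : Fin n), jo).1.1 from h)]
        omega
      · have h2 : ¬ (lo ≤ ((⟨m-2, hm2n⟩ : Fin n), jo).1.1 ∧
          ((⟨m-2, hm2n⟩ : Fin n), jo).1.1 < m) := by
          intro hc; exact h hc.1
        simp only [if_neg h2, if_neg (show ¬ lo ≤ ((⟨m-2, hm2n⟩ : Fin n), jo).1.1 from h)]
        omega
    · by_cases h : lo ≤ m - 2
      · simp only [if_pos (show lo ≤ ((⟨m-2, hm2n⟩ : Fin n), j).1.1 ∧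
          ((⟨m-2, hm2n⟩ : Fin n), j).1.1 < m from ⟨h, by show m - 2 < m; omega⟩),
          if_pos (show lo ≤ ((⟨m-2, hm2n⟩ : Fin n), j).1.1 from h)]
        omega
      · have h2 : ¬ (lo ≤ ((⟨m-2, hm2n⟩ : Fin n), j).1.1 ∧
          ((⟨m-2, hm2n⟩ : Fin n), j).1.1 < m) := by
          intro hc; exact h hc.1
        simp only [if_neg h2, if_neg (show ¬ lo ≤ ((⟨m-2, hm2n⟩ : Fin n), j).1.1 from h)]
        omega
    · intro x hx _ _ _ _
      by_cases h : lo ≤ x.1.1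
      · simp only [if_pos (show lo ≤ x.1.1 ∧ x.1.1 < m from ⟨h, hx⟩), if_pos h]
        omega
      · have h2 : ¬ (lo ≤ x.1.1 ∧ x.1.1 < m) := fun hc => h hc.1
        simp only [if_neg h2, if_neg h]
        omega
  | @tail b c hab hbc ih =>
    obtain ⟨S, a, b2, b4, hS, hflag, I1, I2, I3, I4, I5⟩ := ih
    set vV : Fin n × Fin 2 := (⟨m, hm⟩, j) with hvV
    set vZ : Fin n × Fin 2 := (⟨m, hm⟩, jo) with hvZ
    set vY' : Fin n × Fin 2 := (⟨m-1, hm1n⟩, jo) with hvY'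
    set yMj : Fin n × Fin 2 := (⟨m-1, hm1n⟩, j) with hyMj
    set yY : Fin n × Fin 2 := (⟨m-2, hm2n⟩, jo) with hyY
    set yW2 : Fin n × Fin 2 := (⟨m-2, hm2n⟩, j) with hyW2
    have hjne : j ≠ jo := by
      intro h; rw [h] at hjo; omega
    have hjv : j.1 + jo.1 = 1 := hjo
    -- wall facts
    have hlift : RubblingReach (ladder n) P
        (fun x => b x + (if lo ≤ x.1.1 then 0 else P x)) := by
      have h0 := reachOn_lift (fun x => if lo ≤ x.1.1 then 0 else P x) hab
      have e : (fun x : Fin n × Fin 2 =>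
          (if lo ≤ x.1.1 then P x else 0) + (if lo ≤ x.1.1 then 0 else P x)) = P := by
        funext x; by_cases hx : lo ≤ x.1.1 <;> simp [hx]
      rwa [e] at h0
    have hwall := wall_facts hm (by omega) hm1n hjne hv hlift
    rw [← hvV, ← hvZ, ← hyMj] at hwall
    have Wv : b vV = 0 := by
      have h := hwall.1
      have e : b vV + (if lo ≤ (vV).1.1 then 0 else P vV) = 0 := h
      rw [if_pos (show lo ≤ (vV).1.1 from by show lo ≤ m; omega)] at e
      omega
    have Wz : b vZ ≤ 1 := by
      have e : b vZ + (if lo ≤ (vZ).1.1 then 0 else P vZ) ≤ 1 := hwall.2.1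
      rw [if_pos (show lo ≤ (vZ).1.1 from by show lo ≤ m; omega)] at e
      omega
    have Wmj : b yMj ≤ 1 := by
      have e : b yMj + (if lo ≤ (yMj).1.1 then 0 else P yMj) ≤ 1 := hwall.2.2.1
      rw [if_pos (show lo ≤ (yMj).1.1 from by show lo ≤ m - 1; omega)] at e
      omega
    have Wzmj : ¬ (1 ≤ b vZ ∧ 1 ≤ b yMj) := by
      rintro ⟨hc1, hc2⟩
      exact hwall.2.2.2 ⟨by omega, by omega⟩
    have hrow : ∀ t : Fin 2, t.1 = j.1 ∨ t.1 = jo.1 := by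
      intro t
      have h1 := t.isLt; have h2 := j.isLt; have h3 := jo.isLt
      omega
    have hnbr : ∀ s t : Fin n × Fin 2, (ladder n).Adj s t →
        (s.1.1 = t.1.1 ∧ s.2 ≠ t.2) ∨ (s.1.1 + 1 = t.1.1 ∧ s.2 = t.2) ∨
          (t.1.1 + 1 = s.1.1 ∧ s.2 = t.2) := by
      intro s t h
      rcases ladder_adj.mp h with ⟨h1, h2⟩ | ⟨h1, h2⟩
      · exact Or.inl ⟨by rw [h1], h2⟩
      · rcases h1 with h1 | h1
        · exact Or.inr (Or.inl ⟨h1, h2⟩)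
        · exact Or.inr (Or.inr ⟨h1, h2⟩)
    -- unconditional distinctness
    have dY'Mj : vY' ≠ yMj := vne (Or.inr (by show jo.1 ≠ j.1; omega))
    have dY'W2 : vY' ≠ yW2 := vne (Or.inr (by show jo.1 ≠ j.1; omega))
    have dYMj : yY ≠ yMj := vne (Or.inr (by show jo.1 ≠ j.1; omega))
    have dYW2 : yY ≠ yW2 := vne (Or.inr (by show jo.1 ≠ j.1; omega))
    rcases hbc with ⟨v0, u, hv0S, huS, hadj, hge, hceq⟩ |
      ⟨v0, w0, u, hv0S, hw0S, huS, hne, hadj1, hadj2, hge1, hge2, hceq⟩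
    · -- PEBBLING
      have hv0u : v0 ≠ u := hadj.ne
      have hcv : c v0 + 2 = b v0 := by
        rw [hceq]; dsimp only; rw [if_pos rfl]; omega
      have hcu : c u = b u + 1 := by
        rw [hceq]; dsimp only; rw [if_neg (Ne.symm hv0u), if_pos rfl]
      have hco : ∀ t, t ≠ v0 → t ≠ u → c t = b t := by
        intro t h1 h2; rw [hceq]; dsimp only; rw [if_neg h1, if_neg h2]
      have hcle : ∀ t, t ≠ u → c t ≤ b t := by
        intro t h2
        by_cases h1 : t = v0
        · subst h1; omega
        · rw [hco t h1 h2]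
      by_cases hucol : u.1.1 < m
      · by_cases hv0col : v0.1.1 < m
        · -- inner pebbling
          by_cases hspec : v0 = vY' ∧ 1 ≤ a
          · obtain ⟨hv0y, ha1⟩ := hspec
            subst hv0y
            have hm2 : lo + 2 ≤ m := hflag (by omega)
            have dY'Y : vY' ≠ yY := vne (Or.inl (by show m - 1 ≠ m - 2; omega))
            have dMjW2 : yMj ≠ yW2 := vne (Or.inl (by show m - 1 ≠ m - 2; omega))
            have hu : u = yY ∨ u = yMj := by
              rcases hnbr _ _ hadj with ⟨h1, h2⟩ | ⟨h1, h2⟩ | ⟨h1, h2⟩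
              · right
                rw [veq]
                have h1' : m - 1 = u.1.1 := h1
                refine ⟨show u.1.1 = m - 1 by omega, ?_⟩
                rcases hrow u.2 with hr | hr
                · exact hr
                · exact absurd (Fin.ext (show (vY'.2).1 = u.2.1 by
                    show jo.1 = u.2.1; omega)) h2
              · exfalso
                have h1' : (m - 1) + 1 = u.1.1 := h1
                omega
              · left
                rw [veq]
                have h1' : u.1.1 + 1 = m - 1 := h1
                refine ⟨show u.1.1 = m - 2 by omega, ?_⟩
                have h2' := congrArg Fin.val h2.symm
                exact h2'
            rcases hu with rfl | rfl
            · -- 2@y' -> y : skip, a-1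
              refine ⟨S, a - 1, b2, b4, hS, fun _ => hm2, ?_, ?_, ?_, ?_, ?_⟩
              · omega
              · have h1 := hco yMj (Ne.symm dY'Mj) (Ne.symm dYMj); omega
              · omega
              · have h1 := hco yW2 (Ne.symm dY'W2) (Ne.symm dYW2); omega
              · intro x hx h1 h2 h3 h4
                have h5 := hco x h1 h3
                have h6 := I5 x hx h1 h2 h3 h4
                omega
            · -- 2@y' -> mj : skip, a-1, b2+1
              refine ⟨S, a - 1, b2 + 1, b4, hS, fun _ => hm2, ?_, ?_, ?_, ?_, ?_⟩
              · omega
              · omega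
              · have h1 := hco yY (Ne.symm dY'Y) dYMj; omega
              · have h1 := hco yW2 (Ne.symm dY'W2) (Ne.symm dMjW2); omega
              · intro x hx h1 h2 h3 h4
                have h5 := hco x h1 h2
                have h6 := I5 x hx h1 h2 h3 h4
                omega
          · by_cases hmjc : v0 = yMj
            · exfalso; rw [hmjc] at hge; omega
            · -- replay
              have hsv0 : 2 ≤ S v0 := by
                by_cases h1 : v0 = vY'
                · have ha : a = 0 := by
                    by_contra hh
                    exact hspec ⟨h1, by omega⟩
                  rw [h1] at hge ⊢
                  omega
                · by_cases h3 : v0 = yY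
                  · rw [h3] at hge ⊢; omega
                  · by_cases h4 : v0 = yW2
                    · rw [h4] at hge ⊢; omega
                    · have := I5 v0 hv0col h1 hmjc h3 h4; omega
              refine ⟨fun x => if x = v0 then S x - 2 else if x = u then S x + 1 else S x,
                a, b2, b4,
                hS.tail (Or.inl ⟨v0, u, ⟨hv0S, hv0col⟩, ⟨huS, hucol⟩, hadj, hsv0, rfl⟩),
                hflag, ?_, ?_, ?_, ?_, ?_⟩
              · dsimp only
                by_cases ha1 : vY' = v0
                · rw [← ha1] at hcv hsv0 hge
                  rw [if_pos ha1]
                  omega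
                · rw [if_neg ha1]
                  by_cases ha2 : vY' = u
                  · rw [← ha2] at hcu
                    rw [if_pos ha2]
                    omega
                  · rw [if_neg ha2]
                    have := hco vY' ha1 ha2
                    omega
              · dsimp only
                by_cases ha1 : yMj = v0
                · rw [← ha1] at hcv hsv0 hge
                  rw [if_pos ha1]
                  omega
                · rw [if_neg ha1]
                  by_cases ha2 : yMj = u
                  · rw [← ha2] at hcu
                    rw [if_pos ha2]
                    omega
                  · rw [if_neg ha2]
                    have := hco yMj ha1 ha2
                    omega
              · dsimp only
                by_cases ha1 : yY = v0
                · rw [← ha1] at hcv hsv0 hge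
                  rw [if_pos ha1]
                  omega
                · rw [if_neg ha1]
                  by_cases ha2 : yY = u
                  · rw [← ha2] at hcu
                    rw [if_pos ha2]
                    omega
                  · rw [if_neg ha2]
                    have := hco yY ha1 ha2
                    omega
              · dsimp only
                by_cases ha1 : yW2 = v0
                · rw [← ha1] at hcv hsv0 hge
                  rw [if_pos ha1]
                  omega
                · rw [if_neg ha1]
                  by_cases ha2 : yW2 = u
                  · rw [← ha2] at hcu
                    rw [if_pos ha2]
                    omega
                  · rw [if_neg ha2]
                    have := hco yW2 ha1 ha2
                    omega
              · intro x hx h1 h2 h3 h4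
                dsimp only
                have h5 := I5 x hx h1 h2 h3 h4
                by_cases ha1 : x = v0
                · rw [← ha1] at hcv hsv0 hge
                  rw [if_pos ha1]
                  omega
                · rw [if_neg ha1]
                  by_cases ha2 : x = u
                  · rw [← ha2] at hcu
                    rw [if_pos ha2]
                    omega
                  · rw [if_neg ha2]
                    have := hco x ha1 ha2
                    omega
        · -- pebbling source out of region: impossible
          exfalso
          have hv0m : v0.1.1 = m := by
            rcases hnbr _ _ hadj with ⟨h1, _⟩ | ⟨h1, _⟩ | ⟨h1, _⟩ <;> omega
          rcases hrow v0.2 with hr | hr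
          · have : v0 = vV := by rw [veq]; exact ⟨hv0m, hr⟩
            rw [this] at hge; omega
          · have : v0 = vZ := by rw [veq]; exact ⟨hv0m, hr⟩
            rw [this] at hge; omega
      · -- pebbling target out: skip
        refine ⟨S, a, b2, b4, hS, hflag, ?_, ?_, ?_, ?_, ?_⟩
        · have h1 := hcle vY' (vne (Or.inl (by show m - 1 ≠ u.1.1; omega))); omega
        · have h1 := hcle yMj (vne (Or.inl (by show m - 1 ≠ u.1.1; omega))); omega
        · have h1 := hcle yY (vne (Or.inl (by show m - 2 ≠ u.1.1; omega))); omega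
        · have h1 := hcle yW2 (vne (Or.inl (by show m - 2 ≠ u.1.1; omega))); omega
        · intro x hx h1 h2 h3 h4
          have h5 := hcle x (vne (Or.inl (by omega)))
          have h6 := I5 x hx h1 h2 h3 h4
          omega
    · -- RUBBLING
      have hv0u : v0 ≠ u := hadj1.ne
      have hw0u : w0 ≠ u := hadj2.ne
      have hcv : c v0 + 1 = b v0 := by
        rw [hceq]; dsimp only; rw [if_pos rfl]; omega
      have hcw : c w0 + 1 = b w0 := by
        rw [hceq]; dsimp only; rw [if_neg (Ne.symm hne), if_pos rfl]; omega
      have hcu : c u = b u + 1 := by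
        rw [hceq]; dsimp only
        rw [if_neg (Ne.symm hv0u), if_neg (Ne.symm hw0u), if_pos rfl]
      have hco : ∀ t, t ≠ v0 → t ≠ w0 → t ≠ u → c t = b t := by
        intro t h1 h2 h3; rw [hceq]; dsimp only; rw [if_neg h1, if_neg h2, if_neg h3]
      have hcle : ∀ t, t ≠ u → c t ≤ b t := by
        intro t h3
        by_cases h1 : t = v0
        · subst h1; omega
        · by_cases h2 : t = w0
          · subst h2; omega
          · rw [hco t h1 h2 h3]
      have dMjZ : yMj ≠ vZ := vne (Or.inl (by show m - 1 ≠ m; omega))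
      have dW2Z : yW2 ≠ vZ := vne (Or.inl (by show m - 2 ≠ m; omega))
      have dY'Z : vY' ≠ vZ := vne (Or.inl (by show m - 1 ≠ m; omega))
      have dYZ : yY ≠ vZ := vne (Or.inl (by show m - 2 ≠ m; omega))
      by_cases hucol : u.1.1 < m
      · -- target inside: normalize source order and process
        have main : ∀ va wa : Fin n × Fin 2, va ∈ {w : Fin n × Fin 2 | lo ≤ w.1.1} →
            wa ∈ {w : Fin n × Fin 2 | lo ≤ w.1.1} → va ≠ wa → (ladder n).Adj va u →
            (ladder n).Adj wa u → 1 ≤ b va → 1 ≤ b wa →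
            (c = fun x => if x = va then b x - 1 else if x = wa then b x - 1
                else if x = u then b x + 1 else b x) →
            wa.1.1 < m → (va.1.1 < m → wa ≠ vY') → (va.1.1 < m → va ≠ vY' → wa ≠ yMj) →
            ∃ (S' : Fin n × Fin 2 → ℕ) (a' b2' b4' : ℕ),
              RubblingReachOn (ladder n) {w | lo ≤ w.1.1 ∧ w.1.1 < m}
                (fun w => if lo ≤ w.1.1 ∧ w.1.1 < m then P w else 0) S' ∧
              (1 ≤ a' + b2' + b4' → lo + 2 ≤ m) ∧
              S' vY' + a' ≥ c vY' + b2' ∧ (S' yMj + b2' + b4' ≥ c yMj) ∧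
              S' yY ≥ c yY + (a' + b2' + b4') ∧ S' yW2 ≥ c yW2 + b4' ∧
              ∀ x : Fin n × Fin 2, x.1.1 < m → x ≠ vY' → x ≠ yMj → x ≠ yY → x ≠ yW2 →
                S' x ≥ c x := by
          clear hcv hcw hcu hco hcle hv0u hw0u hceq hne hadj1 hadj2 hge1 hge2 hv0S hw0S
          intro v0 w0 hv0S hw0S hne hadj1 hadj2 hge1 hge2 hceq hw0in hp1 hp2
          have hv0u : v0 ≠ u := hadj1.ne
          have hw0u : w0 ≠ u := hadj2.ne
          have hcv : c v0 + 1 = b v0 := by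
            rw [hceq]; dsimp only; rw [if_pos rfl]; omega
          have hcw : c w0 + 1 = b w0 := by
            rw [hceq]; dsimp only; rw [if_neg (Ne.symm hne), if_pos rfl]; omega
          have hcu : c u = b u + 1 := by
            rw [hceq]; dsimp only
            rw [if_neg (Ne.symm hv0u), if_neg (Ne.symm hw0u), if_pos rfl]
          have hco : ∀ t, t ≠ v0 → t ≠ w0 → t ≠ u → c t = b t := by
            intro t h1 h2 h3; rw [hceq]; dsimp only
            rw [if_neg h1, if_neg h2, if_neg h3]
          have hcle : ∀ t, t ≠ u → c t ≤ b t := by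
            intro t h3
            by_cases h1 : t = v0
            · subst h1; omega
            · by_cases h2 : t = w0
              · subst h2; omega
              · rw [hco t h1 h2 h3]
          by_cases hv0in : v0.1.1 < m
          · -- both sources inside
            by_cases hsy : v0 = vY' ∧ 1 ≤ a
            · obtain ⟨hv0y, ha1⟩ := hsy
              subst hv0y
              have hm2 : lo + 2 ≤ m := hflag (by omega)
              have dY'Y : vY' ≠ yY := vne (Or.inl (by show m - 1 ≠ m - 2; omega))
              have dMjW2 : yMj ≠ yW2 := vne (Or.inl (by show m - 1 ≠ m - 2; omega))
              have hw0y' : w0 ≠ vY' := hp1 hv0in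
              have hu : u = yY ∨ u = yMj := by
                rcases hnbr _ _ hadj1 with ⟨h1, h2⟩ | ⟨h1, h2⟩ | ⟨h1, h2⟩
                · right
                  rw [veq]
                  have h1' : m - 1 = u.1.1 := h1
                  refine ⟨show u.1.1 = m - 1 by omega, ?_⟩
                  rcases hrow u.2 with hr | hr
                  · exact hr
                  · exact absurd (Fin.ext (show (vY'.2).1 = u.2.1 by
                      show jo.1 = u.2.1; omega)) h2
                · exfalso
                  have h1' : (m - 1) + 1 = u.1.1 := h1
                  omega
                · left
                  rw [veq]
                  have h1' : u.1.1 + 1 = m - 1 := h1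
                  refine ⟨show u.1.1 = m - 2 by omega, ?_⟩
                  exact congrArg Fin.val h2.symm
              rcases hu with rfl | rfl
              · -- rubble (y', w0) -> y : skip, a-1
                refine ⟨S, a - 1, b2, b4, hS, fun _ => hm2, ?_, ?_, ?_, ?_, ?_⟩
                · omega
                · have h1 := hcle yMj (Ne.symm dYMj); omega
                · omega
                · have h1 := hcle yW2 (Ne.symm dYW2); omega
                · intro x hx h1 h2 h3 h4
                  have h5 := hcle x h3
                  have h6 := I5 x hx h1 h2 h3 h4
                  omega
              · -- rubble (y', w0) -> mj : w0 must be w2; skip, a-1, b4+1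
                have hw0w2 : w0 = yW2 := by
                  rcases hnbr _ _ hadj2 with ⟨h1, h2⟩ | ⟨h1, h2⟩ | ⟨h1, h2⟩
                  · exfalso
                    apply hw0y'
                    rw [veq]
                    have h1' : w0.1.1 = m - 1 := h1
                    refine ⟨h1', ?_⟩
                    rcases hrow w0.2 with hr | hr
                    · exact absurd (Fin.ext (show w0.2.1 = (yMj.2).1 by
                        show w0.2.1 = j.1; omega)) h2
                    · exact hr
                  · rw [veq]
                    have h1' : w0.1.1 + 1 = m - 1 := h1
                    refine ⟨show w0.1.1 = m - 2 by omega, ?_⟩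
                    exact congrArg Fin.val h2
                  · exfalso
                    have h1' : (m - 1) + 1 = w0.1.1 := h1
                    omega
                subst hw0w2
                refine ⟨S, a - 1, b2, b4 + 1, hS, fun _ => hm2, ?_, ?_, ?_, ?_, ?_⟩
                · omega
                · omega
                · have h1 := hco yY (Ne.symm dY'Y) dYW2 dYMj; omega
                · omega
                · intro x hx h1 h2 h3 h4
                  have h5 := hco x h1 h4 h2
                  have h6 := I5 x hx h1 h2 h3 h4
                  omega
            · by_cases hsm : (v0 = yMj ∨ w0 = yMj) ∧ 1 ≤ b2 + b4
              · -- beta case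
                have hm2 : lo + 2 ≤ m := hflag (by omega)
                have dY'Y : vY' ≠ yY := vne (Or.inl (by show m - 1 ≠ m - 2; omega))
                have dMjW2 : yMj ≠ yW2 := vne (Or.inl (by show m - 1 ≠ m - 2; omega))
                have hv0mj : v0 = yMj := by
                  rcases hsm.1 with h | h
                  · exact h
                  · by_cases hvy : v0 = vY'
                    · exfalso
                      subst hvy
                      subst h
                      have hu : u = yY ∨ u = yMj := by
                        rcases hnbr _ _ hadj1 with ⟨h1, h2⟩ | ⟨h1, h2⟩ | ⟨h1, h2⟩
                        · right
                          rw [veq]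
                          have h1' : m - 1 = u.1.1 := h1
                          refine ⟨show u.1.1 = m - 1 by omega, ?_⟩
                          rcases hrow u.2 with hr | hr
                          · exact hr
                          · exact absurd (Fin.ext (show (vY'.2).1 = u.2.1 by
                              show jo.1 = u.2.1; omega)) h2
                        · exfalso
                          have h1' : (m - 1) + 1 = u.1.1 := h1
                          omega
                        · left
                          rw [veq]
                          have h1' : u.1.1 + 1 = m - 1 := h1
                          refine ⟨show u.1.1 = m - 2 by omega, ?_⟩
                          exact congrArg Fin.val h2.symm
                      rcases hu with rfl | rfl
                      · rcases hnbr _ _ hadj2 with ⟨h1, h2⟩ | ⟨h1, h2⟩ | ⟨h1, h2⟩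
                        · have h1' : m - 1 = m - 2 := h1
                          omega
                        · have h1' : (m - 1) + 1 = m - 2 := h1
                          omega
                        · have h2' : j.1 = jo.1 := congrArg Fin.val h2
                          omega
                      · exact hw0u rfl
                    · exact absurd h (hp2 hv0in hvy)
                subst hv0mj
                have hu : u = yW2 ∨ u = vY' := by
                  rcases hnbr _ _ hadj1 with ⟨h1, h2⟩ | ⟨h1, h2⟩ | ⟨h1, h2⟩
                  · right
                    rw [veq]
                    have h1' : m - 1 = u.1.1 := h1
                    refine ⟨show u.1.1 = m - 1 by omega, ?_⟩
                    rcases hrow u.2 with hr | hr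
                    · exact absurd (Fin.ext (show (yMj.2).1 = u.2.1 by
                        show j.1 = u.2.1; omega)) h2
                    · exact hr
                  · exfalso
                    have h1' : (m - 1) + 1 = u.1.1 := h1
                    omega
                  · left
                    rw [veq]
                    have h1' : u.1.1 + 1 = m - 1 := h1
                    refine ⟨show u.1.1 = m - 2 by omega, ?_⟩
                    exact congrArg Fin.val h2.symm
                rcases hu with rfl | rfl
                · -- u = w2
                  by_cases hb4 : 1 ≤ b4
                  · refine ⟨S, a, b2, b4 - 1, hS, fun _ => hm2, ?_, ?_, ?_, ?_, ?_⟩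
                    · have h1 := hco vY' dY'Mj (Ne.symm (hp1 hv0in)) dY'W2
                      omega
                    · omega
                    · have h1 := hcle yY dYW2; omega
                    · omega
                    · intro x hx h1 h2 h3 h4
                      have h5 := hcle x h4
                      have h6 := I5 x hx h1 h2 h3 h4
                      omega
                  · have hb2 : 1 ≤ b2 := by
                      have := hsm.2; omega
                    by_cases hw0y : w0 = yY
                    · subst hw0y
                      have hsyy : 2 ≤ S yY := by omega
                      refine ⟨fun x => if x = yY then S x - 2 else if x = yW2 then S x + 1
                          else S x, a, b2 - 1, b4,
                        hS.tail (Or.inl ⟨yY, yW2,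
                          ⟨show lo ≤ m - 2 by omega, show m - 2 < m by omega⟩,
                          ⟨show lo ≤ m - 2 by omega, show m - 2 < m by omega⟩,
                          ladder_adj.mpr (Or.inl ⟨rfl, Ne.symm hjne⟩), hsyy, rfl⟩),
                        fun h => hflag (by omega), ?_, ?_, ?_, ?_, ?_⟩
                      · dsimp only
                        rw [if_neg dY'Y, if_neg dY'W2]
                        have h1 := hco vY' dY'Mj dY'Y dY'W2
                        omega
                      · dsimp only
                        rw [if_neg (Ne.symm dYMj), if_neg dMjW2]
                        omega
                      · dsimp only
                        rw [if_pos rfl]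
                        omega
                      · dsimp only
                        rw [if_neg (Ne.symm dYW2), if_pos rfl]
                        omega
                      · intro x hx h1 h2 h3 h4
                        dsimp only
                        rw [if_neg h3, if_neg h4]
                        have h5 := hco x h2 h3 h4
                        have h6 := I5 x hx h1 h2 h3 h4
                        omega
                    · -- sim rubble (w0, yY) -> yW2
                      have hw0y' : w0 ≠ vY' := hp1 hv0in
                      have hw0mj : w0 ≠ yMj := Ne.symm hne
                      have hsw0 : 1 ≤ S w0 := by
                        have := I5 w0 hw0in hw0y' hw0mj hw0y hw0u
                        omega
                      have hsyy : 1 ≤ S yY := by omega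
                      refine ⟨fun x => if x = w0 then S x - 1 else if x = yY then S x - 1
                          else if x = yW2 then S x + 1 else S x, a, b2 - 1, b4,
                        hS.tail (Or.inr ⟨w0, yY, yW2, ⟨hw0S, hw0in⟩,
                          ⟨show lo ≤ m - 2 by omega, show m - 2 < m by omega⟩,
                          ⟨show lo ≤ m - 2 by omega, show m - 2 < m by omega⟩,
                          hw0y, hadj2, ladder_adj.mpr (Or.inl ⟨rfl, Ne.symm hjne⟩),
                          hsw0, hsyy, rfl⟩),
                        fun h => hflag (by omega), ?_, ?_, ?_, ?_, ?_⟩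
                      · dsimp only
                        rw [if_neg (Ne.symm hw0y'), if_neg dY'Y, if_neg dY'W2]
                        have h1 := hco vY' dY'Mj (Ne.symm hw0y') dY'W2
                        omega
                      · dsimp only
                        rw [if_neg (Ne.symm hw0mj), if_neg (Ne.symm dYMj), if_neg dMjW2]
                        omega
                      · dsimp only
                        rw [if_neg (Ne.symm hw0y), if_pos rfl]
                        have h1 := hco yY dYMj (Ne.symm hw0y) dYW2
                        omega
                      · dsimp only
                        rw [if_neg (Ne.symm hw0u), if_neg (Ne.symm dYW2), if_pos rfl]
                        omega
                      · intro x hx h1 h2 h3 h4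
                        dsimp only
                        have h6 := I5 x hx h1 h2 h3 h4
                        by_cases hxw : x = w0
                        · rw [if_pos hxw]
                          rw [← hxw] at hcw
                          omega
                        · rw [if_neg hxw, if_neg h3, if_neg h4]
                          have h5 := hco x h2 hxw h4
                          omega
                · -- u = vY'
                  have hw0yy : w0 = yY := by
                    rcases hnbr _ _ hadj2 with ⟨h1, h2⟩ | ⟨h1, h2⟩ | ⟨h1, h2⟩
                    · exfalso
                      apply hne
                      have hw0mj : w0 = yMj := by
                        rw [veq]
                        have h1' : w0.1.1 = m - 1 := h1
                        refine ⟨h1', ?_⟩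
                        rcases hrow w0.2 with hr | hr
                        · exact hr
                        · exact absurd (Fin.ext (show w0.2.1 = (vY'.2).1 by
                            show w0.2.1 = jo.1; omega)) h2
                      rw [hw0mj]
                    · rw [veq]
                      have h1' : w0.1.1 + 1 = m - 1 := h1
                      refine ⟨show w0.1.1 = m - 2 by omega, ?_⟩
                      exact congrArg Fin.val h2
                    · exfalso
                      have h1' : (m - 1) + 1 = w0.1.1 := h1
                      omega
                  subst hw0yy
                  by_cases hb2 : 1 ≤ b2
                  · refine ⟨S, a, b2 - 1, b4, hS, fun h => hflag (by omega),
                      ?_, ?_, ?_, ?_, ?_⟩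
                    · omega
                    · omega
                    · omega
                    · have h1 := hco yW2 (Ne.symm dMjW2) (Ne.symm dYW2) (Ne.symm dY'W2)
                      omega
                    · intro x hx h1 h2 h3 h4
                      have h5 := hco x h2 h3 h1
                      have h6 := I5 x hx h1 h2 h3 h4
                      omega
                  · have hb4 : 1 ≤ b4 := by
                      have := hsm.2; omega
                    have hsyy : 2 ≤ S yY := by omega
                    refine ⟨fun x => if x = yY then S x - 2 else if x = vY' then S x + 1
                        else S x, a, b2, b4 - 1,
                      hS.tail (Or.inl ⟨yY, vY',
                        ⟨show lo ≤ m - 2 by omega, show m - 2 < m by omega⟩,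
                        ⟨show lo ≤ m - 1 by omega, show m - 1 < m by omega⟩,
                        ladder_adj.mpr (Or.inr ⟨Or.inl (show m - 2 + 1 = m - 1 by omega),
                          rfl⟩), hsyy, rfl⟩),
                      fun h => hflag (by omega), ?_, ?_, ?_, ?_, ?_⟩
                    · dsimp only
                      rw [if_neg dY'Y, if_pos rfl]
                      omega
                    · dsimp only
                      rw [if_neg (Ne.symm dYMj), if_neg (Ne.symm dY'Mj)]
                      omega
                    · dsimp only
                      rw [if_pos rfl]
                      omega
                    · dsimp only
                      rw [if_neg (Ne.symm dYW2), if_neg (Ne.symm dY'W2)]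
                      have h1 := hco yW2 (Ne.symm dMjW2) (Ne.symm dYW2) (Ne.symm dY'W2)
                      omega
                    · intro x hx h1 h2 h3 h4
                      dsimp only
                      rw [if_neg h3, if_neg h1]
                      have h5 := hco x h2 h3 h1
                      have h6 := I5 x hx h1 h2 h3 h4
                      omega
              · -- gamma: replay
                have hw0y' : w0 ≠ vY' := hp1 hv0in
                have hsv0 : 1 ≤ S v0 := by
                  by_cases h1 : v0 = vY'
                  · have ha : a = 0 := by
                      by_contra hh
                      exact hsy ⟨h1, by omega⟩
                    rw [h1] at hge1 ⊢
                    omega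
                  · by_cases h2 : v0 = yMj
                    · have hb : b2 + b4 = 0 := by
                        by_contra hh
                        exact hsm ⟨Or.inl h2, by omega⟩
                      rw [h2] at hge1 ⊢
                      omega
                    · by_cases h3 : v0 = yY
                      · rw [h3] at hge1 ⊢; omega
                      · by_cases h4 : v0 = yW2
                        · rw [h4] at hge1 ⊢; omega
                        · have := I5 v0 hv0in h1 h2 h3 h4; omega
                have hsw0 : 1 ≤ S w0 := by
                  by_cases h2 : w0 = yMj
                  · have hb : b2 + b4 = 0 := by
                      by_contra hh
                      exact hsm ⟨Or.inr h2, by omega⟩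
                    rw [h2] at hge2 ⊢
                    omega
                  · by_cases h3 : w0 = yY
                    · rw [h3] at hge2 ⊢; omega
                    · by_cases h4 : w0 = yW2
                      · rw [h4] at hge2 ⊢; omega
                      · have := I5 w0 hw0in hw0y' h2 h3 h4; omega
                refine ⟨fun x => if x = v0 then S x - 1 else if x = w0 then S x - 1
                    else if x = u then S x + 1 else S x, a, b2, b4,
                  hS.tail (Or.inr ⟨v0, w0, u, ⟨hv0S, hv0in⟩, ⟨hw0S, hw0in⟩,
                    ⟨huS, hucol⟩, hne, hadj1, hadj2, hsv0, hsw0, rfl⟩),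
                  hflag, ?_, ?_, ?_, ?_, ?_⟩
                · dsimp only
                  by_cases ha1 : vY' = v0
                  · rw [← ha1] at hcv hsv0 hge1
                    rw [if_pos ha1]
                    omega
                  · rw [if_neg ha1]
                    by_cases ha2 : vY' = w0
                    · rw [← ha2] at hcw hsw0 hge2
                      rw [if_pos ha2]
                      omega
                    · rw [if_neg ha2]
                      by_cases ha3 : vY' = u
                      · rw [← ha3] at hcu
                        rw [if_pos ha3]
                        omega
                      · rw [if_neg ha3]
                        have := hco vY' ha1 ha2 ha3
                        omega
                · dsimp only
                  by_cases ha1 : yMj = v0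
                  · rw [← ha1] at hcv hsv0 hge1
                    rw [if_pos ha1]
                    omega
                  · rw [if_neg ha1]
                    by_cases ha2 : yMj = w0
                    · rw [← ha2] at hcw hsw0 hge2
                      rw [if_pos ha2]
                      omega
                    · rw [if_neg ha2]
                      by_cases ha3 : yMj = u
                      · rw [← ha3] at hcu
                        rw [if_pos ha3]
                        omega
                      · rw [if_neg ha3]
                        have := hco yMj ha1 ha2 ha3
                        omega
                · dsimp only
                  by_cases ha1 : yY = v0
                  · rw [← ha1] at hcv hsv0 hge1
                    rw [if_pos ha1]
                    omega
                  · rw [if_neg ha1]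
                    by_cases ha2 : yY = w0
                    · rw [← ha2] at hcw hsw0 hge2
                      rw [if_pos ha2]
                      omega
                    · rw [if_neg ha2]
                      by_cases ha3 : yY = u
                      · rw [← ha3] at hcu
                        rw [if_pos ha3]
                        omega
                      · rw [if_neg ha3]
                        have := hco yY ha1 ha2 ha3
                        omega
                · dsimp only
                  by_cases ha1 : yW2 = v0
                  · rw [← ha1] at hcv hsv0 hge1
                    rw [if_pos ha1]
                    omega
                  · rw [if_neg ha1]
                    by_cases ha2 : yW2 = w0
                    · rw [← ha2] at hcw hsw0 hge2
                      rw [if_pos ha2]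
                      omega
                    · rw [if_neg ha2]
                      by_cases ha3 : yW2 = u
                      · rw [← ha3] at hcu
                        rw [if_pos ha3]
                        omega
                      · rw [if_neg ha3]
                        have := hco yW2 ha1 ha2 ha3
                        omega
                · intro x hx h1 h2 h3 h4
                  dsimp only
                  have h6 := I5 x hx h1 h2 h3 h4
                  by_cases ha1 : x = v0
                  · rw [← ha1] at hcv hsv0 hge1
                    rw [if_pos ha1]
                    omega
                  · rw [if_neg ha1]
                    by_cases ha2 : x = w0
                    · rw [← ha2] at hcw hsw0 hge2
                      rw [if_pos ha2]
                      omega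
                    · rw [if_neg ha2]
                      by_cases ha3 : x = u
                      · rw [← ha3] at hcu
                        rw [if_pos ha3]
                        omega
                      · rw [if_neg ha3]
                        have := hco x ha1 ha2 ha3
                        omega
          · -- v0 outside: forced L-forward
            have hv0m : v0.1.1 = m := by
              rcases hnbr _ _ hadj1 with ⟨h1, _⟩ | ⟨h1, _⟩ | ⟨h1, _⟩ <;> omega
            have hv0z : v0 = vZ := by
              rcases hrow v0.2 with hr | hr
              · exfalso
                have hvv : v0 = vV := by rw [veq]; exact ⟨hv0m, hr⟩
                rw [hvv] at hge1
                omega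
              · rw [veq]; exact ⟨hv0m, hr⟩
            subst hv0z
            have hu : u = vY' := by
              rcases hnbr _ _ hadj1 with ⟨h1, h2⟩ | ⟨h1, h2⟩ | ⟨h1, h2⟩
              · exfalso
                have h1' : m = u.1.1 := h1
                omega
              · exfalso
                have h1' : m + 1 = u.1.1 := h1
                omega
              · rw [veq]
                have h1' : u.1.1 + 1 = m := h1
                refine ⟨show u.1.1 = m - 1 by omega, ?_⟩
                exact congrArg Fin.val h2.symm
            subst hu
            have hw0fact : w0 = yY ∧ lo + 2 ≤ m := by
              rcases hnbr _ _ hadj2 with ⟨h1, h2⟩ | ⟨h1, h2⟩ | ⟨h1, h2⟩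
              · exfalso
                have hw0mj : w0 = yMj := by
                  rw [veq]
                  have h1' : w0.1.1 = m - 1 := h1
                  refine ⟨h1', ?_⟩
                  rcases hrow w0.2 with hr | hr
                  · exact hr
                  · exact absurd (Fin.ext (show w0.2.1 = (vY'.2).1 by
                      show w0.2.1 = jo.1; omega)) h2
                rw [hw0mj] at hge2
                exact Wzmj ⟨hge1, hge2⟩
              · have h1' : w0.1.1 + 1 = m - 1 := h1
                have hw0lo : lo ≤ w0.1.1 := hw0S
                constructor
                · rw [veq]
                  refine ⟨show w0.1.1 = m - 2 by omega, ?_⟩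
                  exact congrArg Fin.val h2
                · omega
              · exfalso
                have h1' : (m - 1) + 1 = w0.1.1 := h1
                omega
            obtain ⟨hw0yy, hm2⟩ := hw0fact
            subst hw0yy
            refine ⟨S, a + 1, b2, b4, hS, fun _ => hm2, ?_, ?_, ?_, ?_, ?_⟩
            · omega
            · have h1 := hco yMj dMjZ (Ne.symm dYMj) (Ne.symm dY'Mj)
              omega
            · omega
            · have h1 := hco yW2 dW2Z (Ne.symm dYW2) (Ne.symm dY'W2)
              omega
            · intro x hx h1 h2 h3 h4
              have h5 := hco x (vne (Or.inl (show x.1.1 ≠ m by omega))) h3 h1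
              have h6 := I5 x hx h1 h2 h3 h4
              omega
        -- now dispatch to main with normalized order
        by_cases hv0in : v0.1.1 < m
        · by_cases hw0in : w0.1.1 < m
          · have hsw : c = fun x => if x = w0 then b x - 1 else if x = v0 then b x - 1
                else if x = u then b x + 1 else b x := by
              rw [hceq]; funext x
              by_cases h1 : x = v0
              · rw [if_pos h1, if_neg (fun hh => hne ((h1.symm.trans hh).symm ▸ rfl)),
                  if_pos h1]
              · rw [if_neg h1]
                by_cases h2 : x = w0
                · rw [if_pos h2, if_pos h2]
                · rw [if_neg h2, if_neg h2, if_neg h1]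
            by_cases hy1 : w0 = vY'
            · exact main w0 v0 hw0S hv0S (Ne.symm hne) hadj2 hadj1 hge2 hge1 hsw hv0in
                (fun _ hc => hne (hc.trans hy1.symm))
                (fun _ hc2 => absurd hy1 hc2)
            · by_cases hy2 : w0 = yMj ∧ v0 ≠ vY'
              · exact main w0 v0 hw0S hv0S (Ne.symm hne) hadj2 hadj1 hge2 hge1 hsw hv0in
                  (fun _ => hy2.2) (fun _ _ hc => hne (hc.trans hy2.1.symm))
              · exact main v0 w0 hv0S hw0S hne hadj1 hadj2 hge1 hge2 hceq hw0in
                  (fun _ => hy1) (fun _ hv0y hc => absurd ⟨hc, hv0y⟩ hy2)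
          · -- w0 outside, v0 inside: swap
            have hsw : c = fun x => if x = w0 then b x - 1 else if x = v0 then b x - 1
                else if x = u then b x + 1 else b x := by
              rw [hceq]; funext x
              by_cases h1 : x = v0
              · rw [if_pos h1, if_neg (fun hh => hne ((h1.symm.trans hh).symm ▸ rfl)),
                  if_pos h1]
              · rw [if_neg h1]
                by_cases h2 : x = w0
                · rw [if_pos h2, if_pos h2]
                · rw [if_neg h2, if_neg h2, if_neg h1]
            exact main w0 v0 hw0S hv0S (Ne.symm hne) hadj2 hadj1 hge2 hge1 hsw hv0in
              (fun hc => absurd hc hw0in) (fun hc => absurd hc hw0in)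
        · by_cases hw0in : w0.1.1 < m
          · exact main v0 w0 hv0S hw0S hne hadj1 hadj2 hge1 hge2 hceq hw0in
              (fun hc => absurd hc hv0in) (fun hc => absurd hc hv0in)
          · -- both sources outside: impossible
            exfalso
            have hv0m : v0.1.1 = m := by
              rcases hnbr _ _ hadj1 with ⟨h1, _⟩ | ⟨h1, _⟩ | ⟨h1, _⟩ <;> omega
            have hw0m : w0.1.1 = m := by
              rcases hnbr _ _ hadj2 with ⟨h1, _⟩ | ⟨h1, _⟩ | ⟨h1, _⟩ <;> omega
            have hv0zz : v0 = vZ := by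
              rcases hrow v0.2 with hr | hr
              · exfalso
                have hvv : v0 = vV := by rw [veq]; exact ⟨hv0m, hr⟩
                rw [hvv] at hge1
                omega
              · rw [veq]; exact ⟨hv0m, hr⟩
            have hw0zz : w0 = vZ := by
              rcases hrow w0.2 with hr | hr
              · exfalso
                have hvv : w0 = vV := by rw [veq]; exact ⟨hw0m, hr⟩
                rw [hvv] at hge2
                omega
              · rw [veq]; exact ⟨hw0m, hr⟩
            exact hne (hv0zz.trans hw0zz.symm)
      · -- rubbling target outside: skip
        refine ⟨S, a, b2, b4, hS, hflag, ?_, ?_, ?_, ?_, ?_⟩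
        · have h1 := hcle vY' (vne (Or.inl (by show m - 1 ≠ u.1.1; omega))); omega
        · have h1 := hcle yMj (vne (Or.inl (by show m - 1 ≠ u.1.1; omega))); omega
        · have h1 := hcle yY (vne (Or.inl (by show m - 2 ≠ u.1.1; omega))); omega
        · have h1 := hcle yW2 (vne (Or.inl (by show m - 2 ≠ u.1.1; omega))); omega
        · intro x hx h1 h2 h3 h4
          have h5 := hcle x (vne (Or.inl (by omega)))
          have h6 := I5 x hx h1 h2 h3 h4
          omega
end Sim

section Final
variable {n : ℕ}

lemma reachOn_rv' {S : Set (Fin n × Fin 2)} {p q p' q' : Fin n × Fin 2 → ℕ}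
    (h : RubblingReachOn (ladder n) S p q)
    {S' : Set (Fin n × Fin 2)} (hS : ∀ x, x ∈ S' ↔ rv x ∈ S)
    (hp : ∀ x, p' x = p (rv x)) (hq : ∀ x, q' x = q (rv x)) :
    RubblingReachOn (ladder n) S' p' q' := by
  have h2 := reachOn_rv h
  have e1 : S' = rv ⁻¹' S := Set.ext (fun x => (hS x).trans (Set.mem_preimage).symm)
  have e2 : p' = fun x => p (rv x) := funext hp
  have e3 : q' = fun x => q (rv x) := funext hq
  rw [e1, e2, e3]
  exact h2

lemma sim_reach (P : Fin n × Fin 2 → ℕ) (lo m : ℕ) (hlom : lo < m) (hm : m < n)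
    (j jo : Fin 2) (hjo : j.1 + jo.1 = 1)
    (hv : ¬ KReachable (ladder n) P ((⟨m, hm⟩ : Fin n), j) 1)
    (t : Fin n × Fin 2) (ht : t.1.1 = lo) {act : Fin n × Fin 2 → ℕ}
    (hact : RubblingReachOn (ladder n) {w | lo ≤ w.1.1}
      (fun w => if lo ≤ w.1.1 then P w else 0) act)
    (h1t : 1 ≤ act t) :
    ∃ S, RubblingReachOn (ladder n) {w | lo ≤ w.1.1 ∧ w.1.1 < m}
        (fun w => if lo ≤ w.1.1 ∧ w.1.1 < m then P w else 0) S ∧ 1 ≤ S t := by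
  have hm1n : m - 1 < n := by omega
  have hm2n : m - 2 < n := by omega
  obtain ⟨S, a, b2, b4, hS, hflag, I1, I2, I3, I4, I5⟩ :=
    sim P lo m hlom hm hm1n hm2n j jo hjo hv hact
  refine ⟨S, hS, ?_⟩
  by_cases h1 : t = ((⟨m-1, hm1n⟩ : Fin n), jo)
  · have hcol : t.1.1 = m - 1 := by rw [h1]
    have hA : a + b2 + b4 = 0 := by
      by_contra hh
      have := hflag (by omega)
      omega
    rw [h1] at h1t
    rw [h1]
    omega
  · by_cases h2 : t = ((⟨m-1, hm1n⟩ : Fin n), j)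
    · have hcol : t.1.1 = m - 1 := by rw [h2]
      have hA : a + b2 + b4 = 0 := by
        by_contra hh
        have := hflag (by omega)
        omega
      rw [h2] at h1t
      rw [h2]
      omega
    · by_cases h3 : t = ((⟨m-2, hm2n⟩ : Fin n), jo)
      · rw [h3] at h1t; rw [h3]; omega
      · by_cases h4 : t = ((⟨m-2, hm2n⟩ : Fin n), j)
        · rw [h4] at h1t; rw [h4]; omega
        · have := I5 t (by omega) h1 h2 h3 h4
          omega

end Final


/-- If `l` is right `k_l`-reachable and `r` is left `k_r`-reachable but `l` and `r` are
not independently reachable, then every vertex in a column strictly between the columns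
of `l` and `r` is reachable. -/
theorem dependent_implies_between_reachable (n : ℕ) (p : Fin n × Fin 2 → ℕ)
    (l r : Fin n × Fin 2) (hlr : l.1 < r.1) (kl kr : ℕ) (hkl : 1 ≤ kl) (hkr : 1 ≤ kr)
    (hl : RightKReachable n p l kl) (hr : LeftKReachable n p r kr)
    (hdep : ¬ ∃ q, RubblingReach (ladder n) p q ∧ 1 ≤ q l ∧ 1 ≤ q r) :
    ∀ v : Fin n × Fin 2, l.1 < v.1 → v.1 < r.1 → KReachable (ladder n) p v 1 := by
  intro v hlv hvr
  by_contra hv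
  set m : ℕ := v.1.1 with hmdef
  have hm : m < n := v.1.isLt
  have hrn : r.1.1 < n := r.1.isLt
  have hlom : l.1.1 < m := hlv
  have hmr : m < r.1.1 := hvr
  set j : Fin 2 := v.2 with hjdef
  have hj2 : j.1 < 2 := j.isLt
  set jo : Fin 2 := ⟨1 - j.1, by omega⟩ with hjodef
  have hjo : j.1 + jo.1 = 1 := by
    show j.1 + (1 - j.1) = 1
    omega
  have hm'n : n - 1 - m < n := by omega
  have hveq : ((⟨m, hm⟩ : Fin n), j) = v := by
    rw [veq]; exact ⟨rfl, rfl⟩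
  have hv' : ¬ KReachable (ladder n) p ((⟨m, hm⟩ : Fin n), j) 1 := by
    rw [hveq]; exact hv
  -- LEFT SIDE: reach l from columns [l.1, m)
  obtain ⟨q1, hq1, hq1l⟩ := hl
  have hset1 : {w : Fin n × Fin 2 | l.1 ≤ w.1} = {w : Fin n × Fin 2 | l.1.1 ≤ w.1.1} := by
    ext w; exact Fin.le_def
  have hfun1 : (fun w : Fin n × Fin 2 => if l.1 ≤ w.1 then p w else 0) =
      (fun w => if l.1.1 ≤ w.1.1 then p w else 0) := by
    funext w
    by_cases h : l.1 ≤ w.1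
    · rw [if_pos h, if_pos (Fin.le_def.mp h)]
    · rw [if_neg h, if_neg (fun hh => h (Fin.le_def.mpr hh))]
  rw [hset1, hfun1] at hq1
  obtain ⟨S1, hS1, hS1l⟩ := sim_reach p l.1.1 m hlom hm j jo hjo hv' l rfl hq1
    (le_trans hkl hq1l)
  -- RIGHT SIDE: reach r from columns (m, r.1]
  have hv'' : ¬ KReachable (ladder n) (fun x => p (rv x))
      ((⟨n - 1 - m, hm'n⟩ : Fin n), j) 1 := by
    intro hk
    apply hv'
    apply kreach_rv
    have hrv : rv ((⟨m, hm⟩ : Fin n), j) = ((⟨n - 1 - m, hm'n⟩ : Fin n), j) := by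
      rw [veq]
      refine ⟨?_, rfl⟩
      show ((⟨m, hm⟩ : Fin n).rev).val = n - 1 - m
      rw [Fin.val_rev]
      show n - (m + 1) = n - 1 - m
      omega
    rw [hrv]
    exact hk
  obtain ⟨q2, hq2, hq2r⟩ := hr
  have hq2' : RubblingReachOn (ladder n) {w : Fin n × Fin 2 | n - 1 - r.1.1 ≤ w.1.1}
      (fun w => if n - 1 - r.1.1 ≤ w.1.1 then (fun x => p (rv x)) w else 0)
      (fun x => q2 (rv x)) := by
    refine reachOn_rv' hq2 ?_ ?_ (fun x => rfl)
    · intro x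
      show (n - 1 - r.1.1 ≤ x.1.1) ↔ ((rv x).1 ≤ r.1)
      rw [Fin.le_def, rv_col]
      have := x.1.isLt
      constructor <;> (intro; omega)
    · intro x
      by_cases h : n - 1 - r.1.1 ≤ x.1.1
      · rw [if_pos h, if_pos (show (rv x).1 ≤ r.1 by
          rw [Fin.le_def, rv_col]; have := x.1.isLt; omega)]
      · rw [if_neg h, if_neg (show ¬ (rv x).1 ≤ r.1 by
          rw [Fin.le_def, rv_col]; have := x.1.isLt; omega)]
  have hlom' : n - 1 - r.1.1 < n - 1 - m := by omega
  obtain ⟨S2, hS2, hS2r⟩ := sim_reach (fun x => p (rv x)) (n - 1 - r.1.1) (n - 1 - m)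
    hlom' hm'n j jo hjo hv'' (rv r) (by rw [rv_col]) hq2'
    (by show 1 ≤ q2 (rv (rv r)); rw [rv_rv]; exact le_trans hkr hq2r)
  -- transport right side back
  have hS2' : RubblingReachOn (ladder n) {w : Fin n × Fin 2 | m < w.1.1 ∧ w.1.1 ≤ r.1.1}
      (fun w => if m < w.1.1 ∧ w.1.1 ≤ r.1.1 then p w else 0)
      (fun x => S2 (rv x)) := by
    refine reachOn_rv' hS2 ?_ ?_ (fun x => rfl)
    · intro x
      show (m < x.1.1 ∧ x.1.1 ≤ r.1.1) ↔
        (n - 1 - r.1.1 ≤ (rv x).1.1 ∧ (rv x).1.1 < n - 1 - m)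
      rw [rv_col]
      have := x.1.isLt
      constructor <;> (intro h; omega)
    · intro x
      have hxlt := x.1.isLt
      by_cases h : m < x.1.1 ∧ x.1.1 ≤ r.1.1
      · rw [if_pos h, if_pos (show n - 1 - r.1.1 ≤ (rv x).1.1 ∧ (rv x).1.1 < n - 1 - m by
          rw [rv_col]; omega)]
        rw [rv_rv]
      · rw [if_neg h, if_neg (show ¬ (n - 1 - r.1.1 ≤ (rv x).1.1 ∧ (rv x).1.1 < n - 1 - m) by
          rw [rv_col]; intro hc; exact h (by omega))]
  -- combine
  have hdisj : Disjoint {w : Fin n × Fin 2 | l.1.1 ≤ w.1.1 ∧ w.1.1 < m}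
      {w : Fin n × Fin 2 | m < w.1.1 ∧ w.1.1 ≤ r.1.1} := by
    rw [Set.disjoint_left]
    intro w hw1 hw2
    simp only [Set.mem_setOf_eq] at hw1 hw2
    omega
  obtain ⟨qq, hreach, hA, hB⟩ := combine hdisj
    (fun x hx => if_pos hx) (fun x hx => if_neg hx)
    (fun x hx => if_pos hx) (fun x hx => if_neg hx)
    hS1 hS2'
  apply hdep
  refine ⟨qq, hreach, ?_, ?_⟩
  · rw [hA l ⟨le_refl _, hlom⟩]
    exact hS1l
  · rw [hB r ⟨hmr, le_refl _⟩]
    show 1 ≤ S2 (rv r)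
    exact hS2r
end
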